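/- arXiv:2209.14588 — 6 statements merged into one kernel-verified Lean document; each statement's English description precedes it below -/
import Mathlib

section
/- (Lemma 3.1.) For every integer x ≥ 2 there exists a family of permutations τ_1, …, τ_{2x−2} of Fin x × Fin 2 such that each τ_k is an involution satisfying (τ_k p).1 ≠ p.1 for every p (in particular each τ_k is fixed-point-free), and for every ordered pair (p, q) of elements of Fin x × Fin 2 with p.1 ≠ q.1 there is exactly one index k with τ_k(p) = q. (That is, the digraph K_x^* ≀ K̄_2, whose vertices are Fin x × Fin 2 and whose arcs are the pairs (p, q) with p.1 ≠ q.1, has a K_2^*-factorization into 2x − 2 factors, each factor being a perfect matching of digons.) -/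
namespace Wreath31


def sig {m : ℕ} (c : ZMod m) : Option (ZMod m) → Option (ZMod m)
  | none => some c
  | some i => if i = c then none else some (2*c - i)

lemma sig_sig {m : ℕ} (c : ZMod m) (a : Option (ZMod m)) : sig c (sig c a) = a := by
  cases a with
  | none => simp [sig]
  | some i =>
    by_cases h : i = c
    · simp [sig, h]
    · have h2 : 2*c - i ≠ c := fun hh => h (by linear_combination -hh)
      simp only [sig, if_neg h, if_neg h2, Option.some.injEq]
      ring

lemma sig_c_inj {m : ℕ} (hc : ∀ u v : ZMod m, 2*u = 2*v → u = v)
    {c c' : ZMod m} {a : Option (ZMod m)} (h : sig c a = sig c' a) : c = c' := by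
  cases a with
  | none => simpa [sig] using h
  | some i =>
    by_cases h1 : i = c <;> by_cases h2 : i = c' <;> simp [sig, h1, h2] at h
    · exact h1.symm.trans h2
    · by_cases hcc : c = c'
      · exact hcc
      · simp [hcc] at h
    · exact h.symm
    · exact hc c c' (by linear_combination h)

lemma sig_ne {m : ℕ} (hc : ∀ u v : ZMod m, 2*u = 2*v → u = v)
    (c : ZMod m) (a : Option (ZMod m)) : sig c a ≠ a := by
  cases a with
  | none => simp [sig]
  | some i =>
    by_cases h1 : i = c
    · simp [sig, h1]
    · simp only [sig, if_neg h1, ne_eq, Option.some.injEq]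
      intro hh
      exact h1 (hc i c (by linear_combination -hh))

lemma sig_exists {m : ℕ} (hc : ∀ u v : ZMod m, 2*u = 2*v → u = v)
    {h : ZMod m} (h2 : 2*h = 1) {a b : Option (ZMod m)}
    (hab : b ≠ a) (h0 : b ≠ sig 0 a) : ∃ c, c ≠ 0 ∧ sig c a = b := by
  cases a with
  | none =>
    cases b with
    | none => exact absurd rfl hab
    | some j =>
      refine ⟨j, ?_, rfl⟩
      intro hj
      exact h0 (by simp [sig, hj])
  | some i =>
    cases b with
    | none =>
      refine ⟨i, ?_, by simp [sig]⟩
      intro hi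
      exact h0 (by simp [sig, hi])
    | some j =>
      have hij : i ≠ j := fun hh => hab (by rw [hh])
      refine ⟨h*(i+j), ?_, ?_⟩
      · intro hz
        have hsum : i + j = 0 := by linear_combination 2*hz - (i+j)*h2
        by_cases hi0 : i = 0
        · exact hij (by linear_combination 2*hi0 - hsum)
        · refine h0 ?_
          simp only [sig, if_neg hi0, Option.some.injEq]
          linear_combination hsum
      · have hic : i ≠ h*(i+j) := fun hh => hij (by linear_combination 2*hh + (i+j)*h2)
        simp only [sig, if_neg hic, Option.some.injEq]
        linear_combination (i+j)*h2


def emb (x : ℕ) (p : Fin x × Fin 2) : Option (ZMod (2*x-1)) :=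
  if p.2 = 0 then (if (p.1 : ℕ) = 0 then none else some ((p.1 : ℕ) : ZMod (2*x-1)))
  else some (-((p.1 : ℕ) : ZMod (2*x-1)))


lemma emb_inj {x : ℕ} (hx : 2 ≤ x) : Function.Injective (emb x) := by
  haveI : NeZero (2*x-1) := ⟨by omega⟩
  have castinj : ∀ a b : Fin x, ((a:ℕ):ZMod (2*x-1)) = ((b:ℕ):ZMod (2*x-1)) → a = b := by
    intro a b h
    have ha := a.isLt
    have hb := b.isLt
    have h1 := ZMod.val_cast_of_lt (show (a:ℕ) < 2*x-1 by omega)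
    have h2 := ZMod.val_cast_of_lt (show (b:ℕ) < 2*x-1 by omega)
    exact Fin.ext (by rw [← h1, ← h2, h])
  have negfact : ∀ a b : Fin x, ((a:ℕ):ZMod (2*x-1)) = -((b:ℕ):ZMod (2*x-1)) →
      ((a:ℕ) = 0 ∧ (b:ℕ) = 0) := by
    intro a b h
    have hz : (((a:ℕ)+(b:ℕ) : ℕ) : ZMod (2*x-1)) = 0 := by push_cast; linear_combination h
    rw [ZMod.natCast_eq_zero_iff] at hz
    have ha := a.isLt; have hb := b.isLt
    have := Nat.eq_zero_of_dvd_of_lt hz (by omega)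
    omega
  rintro ⟨a, j⟩ ⟨b, j'⟩ h
  fin_cases j <;> fin_cases j' <;> simp only [emb] at h <;> norm_num at h ⊢
  · by_cases ha : (a:ℕ) = 0 <;> by_cases hb : (b:ℕ) = 0
    · exact Fin.ext (by omega)
    · rw [if_pos ha, if_neg hb] at h; exact absurd h (by simp)
    · rw [if_neg ha, if_pos hb] at h; exact absurd h (by simp)
    · rw [if_neg ha, if_neg hb] at h
      exact castinj a b (by injection h)
  · exact absurd (negfact a b h.2).1 h.1
  · exact absurd (negfact b a h.2.symm).1 h.1
  · exact castinj a b h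


lemma emb_bij {x : ℕ} (hx : 2 ≤ x) : Function.Bijective (emb x) := by
  haveI : NeZero (2*x-1) := ⟨by omega⟩
  rw [Fintype.bijective_iff_injective_and_card]
  refine ⟨emb_inj hx, ?_⟩
  simp only [Fintype.card_prod, Fintype.card_fin, Fintype.card_option, ZMod.card]
  omega

lemma sig0emb0 {x : ℕ} (hx : 2 ≤ x) (a : Fin x) :
    sig 0 (emb x (a, 0)) = emb x (a, 1) := by
  haveI : NeZero (2*x-1) := ⟨by omega⟩
  by_cases ha : (a:ℕ) = 0
  · simp [emb, sig, ha]
  · have hA : ((a:ℕ) : ZMod (2*x-1)) ≠ 0 := by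
      intro hz
      have := ZMod.val_cast_of_lt (show (a:ℕ) < 2*x-1 by have := a.isLt; omega)
      rw [hz, ZMod.val_zero] at this
      exact ha this.symm
    have e1 : emb x (a, 0) = some ((a:ℕ) : ZMod (2*x-1)) := by simp [emb, ha]
    have e2 : emb x (a, 1) = some (-((a:ℕ) : ZMod (2*x-1))) := by simp [emb]
    rw [e1, e2]
    show (if ((a:ℕ):ZMod (2*x-1)) = 0 then none else some (2*0 - ((a:ℕ):ZMod (2*x-1)))) = _
    rw [if_neg hA]
    norm_num

lemma sig0emb {x : ℕ} (hx : 2 ≤ x) (a : Fin x) (j : Fin 2) :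
    sig 0 (emb x (a, j)) = emb x (a, 1 - j) := by
  fin_cases j
  · exact sig0emb0 hx a
  · show sig 0 (emb x (a, 1)) = emb x (a, 0)
    rw [← sig0emb0 hx a, sig_sig]


end Wreath31

open Wreath31 in

/-- Lemma 3.1: the digraph `K_x^* ≀ K̄_2` (vertices `Fin x × Fin 2`, arcs all
ordered pairs with distinct first coordinates) has a `K_2^*`-factorization into
`2x - 2` factors: fixed-point-free involutions `τ k` moving the first
coordinate, such that every arc `(p, q)` lies in exactly one factor. -/
theorem wreath_K2star_factorization (x : ℕ) (hx : 2 ≤ x) :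
    ∃ τ : Fin (2 * x - 2) → Equiv.Perm (Fin x × Fin 2),
      (∀ k, ∀ p, τ k (τ k p) = p) ∧
      (∀ k, ∀ p, (τ k p).1 ≠ p.1) ∧
      (∀ p q : Fin x × Fin 2, p.1 ≠ q.1 → ∃! k, τ k p = q) := by
  haveI : NeZero (2*x-1) := ⟨by omega⟩
  -- 2 is invertible mod 2x-1
  have hone : (2 : ZMod (2*x-1)) * ((x : ℕ) : ZMod (2*x-1)) = 1 := by
    have h1 : (2 : ZMod (2*x-1)) * ((x : ℕ) : ZMod (2*x-1)) = ((2*x : ℕ) : ZMod (2*x-1)) := by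
      push_cast; ring
    rw [h1, show (2*x : ℕ) = (2*x-1)+1 from by omega]
    push_cast
    simp [ZMod.natCast_self]
  have hc : ∀ u v : ZMod (2*x-1), 2*u = 2*v → u = v := by
    intro u v huv
    linear_combination ((x:ℕ) : ZMod (2*x-1)) * huv + (v - u) * hone
  -- the equivalence
  set E : (Fin x × Fin 2) ≃ Option (ZMod (2*x-1)) := Equiv.ofBijective (emb x) (emb_bij hx)
    with hEdef
  have hE : ∀ p, E p = emb x p := fun _ => rfl
  -- the nonzero constants
  set ck : Fin (2*x-2) → ZMod (2*x-1) := fun k => (((k:ℕ)+1 : ℕ) : ZMod (2*x-1)) with hckdef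
  have hck0 : ∀ k, ck k ≠ 0 := by
    intro k hk
    rw [hckdef] at hk
    rw [ZMod.natCast_eq_zero_iff] at hk
    have := k.isLt
    have := Nat.le_of_dvd (by omega) hk
    omega
  have hckinj : ∀ k k' : Fin (2*x-2), ck k = ck k' → k = k' := by
    intro k k' h
    have h1 := ZMod.val_cast_of_lt (show (k:ℕ)+1 < 2*x-1 from by have := k.isLt; omega)
    have h2 := ZMod.val_cast_of_lt (show (k':ℕ)+1 < 2*x-1 from by have := k'.isLt; omega)
    have := congrArg ZMod.val h
    rw [hckdef] at this
    simp only at this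
    rw [h1, h2] at this
    exact Fin.ext (by omega)
  -- the permutations
  refine ⟨fun k => (E.trans (Function.Involutive.toPerm (sig (ck k)) (sig_sig (ck k)))).trans
      E.symm, ?_, ?_, ?_⟩
  · intro k p
    show E.symm (sig (ck k) (E (E.symm (sig (ck k) (E p))))) = p
    rw [Equiv.apply_symm_apply, sig_sig, Equiv.symm_apply_apply]
  · intro k p heq
    set q := E.symm (sig (ck k) (E p)) with hqdef
    have hEq : emb x q = sig (ck k) (emb x p) := by
      show E q = _
      rw [hqdef, Equiv.apply_symm_apply]
      rfl
    have hfst : q.1 = p.1 := heq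
    have hq2 : q = (p.1, q.2) := by
      rw [← hfst]
    have hcase : q.2 = p.2 ∨ q.2 = 1 - p.2 :=
      (by decide : ∀ u v : Fin 2, u = v ∨ u = 1 - v) q.2 p.2
    rcases hcase with hcc | hcc
    · have hqp : q = p := by rw [hq2, hcc]
      rw [hqp] at hEq
      exact sig_ne hc (ck k) (emb x p) hEq.symm
    · have h0 : emb x q = sig 0 (emb x p) := by
        rw [hq2, hcc]
        exact (sig0emb hx p.1 p.2).symm
      rw [h0] at hEq
      exact hck0 k (sig_c_inj hc hEq.symm)
  · intro p q hpq
    have hba : emb x q ≠ emb x p := fun h => hpq (congrArg Prod.fst (emb_inj hx h)).symm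
    have hb0 : emb x q ≠ sig 0 (emb x p) := by
      intro h
      rw [show sig 0 (emb x p) = emb x (p.1, 1 - p.2) from sig0emb hx p.1 p.2] at h
      have := emb_inj hx h
      exact hpq (congrArg Prod.fst this).symm
    obtain ⟨c, hc0, hsig⟩ := sig_exists hc hone hba hb0
    have hval1 : c.val ≠ 0 := fun h => hc0 ((ZMod.val_eq_zero c).mp h)
    have hval2 : c.val < 2*x-1 := ZMod.val_lt c
    refine ⟨⟨c.val - 1, by omega⟩, ?_, ?_⟩
    · have hk : ck ⟨c.val - 1, by omega⟩ = c := by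
        rw [hckdef]
        simp only
        rw [show c.val - 1 + 1 = c.val from by omega, ZMod.natCast_zmod_val]
      show E.symm (sig (ck ⟨c.val - 1, by omega⟩) (E p)) = q
      rw [Equiv.symm_apply_eq, hk]
      exact hsig
    · intro k' hk'
      have h1 : sig (ck k') (emb x p) = emb x q :=
        (Equiv.symm_apply_eq E).mp hk'
      have hk : ck ⟨c.val - 1, by omega⟩ = c := by
        rw [hckdef]
        simp only
        rw [show c.val - 1 + 1 = c.val from by omega, ZMod.natCast_zmod_val]
      apply hckinj
      rw [hk]
      exact sig_c_inj hc (h1.trans hsig.symm)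
end

section
/- (Lemma 3.2, main even construction.) Let m ≥ 4 and n ≥ 4 be even integers and let h = lcm(m, n). Suppose that for all nonnegative integers r′, s′ with r′ + s′ = h − 1 there is a solution to HWP*(h; m^{r′}, n^{s′}). Then for every positive integer x and all nonnegative integers r, s with r + s = h·x − 1, there is a solution to HWP*(h·x; m^r, n^s). -/
/-- A solution to the directed Hamilton–Waterloo problem HWP*(v; m^r, n^s):
a family of `r + s` permutations of `Fin v`, the first `r` of which are
fixed-point-free with all cycles of length `m` (i.e. every point has minimal
period `m`), the last `s` fixed-point-free with all cycles of length `n`,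
such that for every ordered pair of distinct vertices `(x, y)` there is exactly
one index `i` with `σ i x = y`. -/
def HWPStarSolution (v m n r s : ℕ) : Prop :=
  ∃ σ : Fin (r + s) → Equiv.Perm (Fin v),
    (∀ i : Fin (r + s), (i : ℕ) < r → ∀ x : Fin v, Function.minimalPeriod ⇑(σ i) x = m) ∧
    (∀ i : Fin (r + s), r ≤ (i : ℕ) → ∀ x : Fin v, Function.minimalPeriod ⇑(σ i) x = n) ∧
    (∀ x y : Fin v, x ≠ y → ∃! i : Fin (r + s), σ i x = y)


open Function

/-! ### Generic minimal period lemmas -/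

private lemma minPeriod_congr {α β : Type*} {f : α → α} {g : β → β} {a : α} {b : β}
    (H : ∀ k, f^[k] a = a ↔ g^[k] b = b) :
    minimalPeriod f a = minimalPeriod g b := by
  have hmem : a ∈ periodicPts f ↔ b ∈ periodicPts g := by
    constructor
    · rintro ⟨n, hn, hper⟩
      exact ⟨n, hn, show g^[n] b = b from (H n).mp (show f^[n] a = a from hper)⟩
    · rintro ⟨n, hn, hper⟩
      exact ⟨n, hn, show f^[n] a = a from (H n).mpr (show g^[n] b = b from hper)⟩
  by_cases hb : b ∈ periodicPts g
  · have ha : a ∈ periodicPts f := hmem.mpr hb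
    have h1 : IsPeriodicPt f (minimalPeriod g b) a := by
      have := isPeriodicPt_minimalPeriod g b
      simpa [IsPeriodicPt, IsFixedPt] using (H _).mpr (by simpa [IsPeriodicPt, IsFixedPt] using this)
    have h2 : IsPeriodicPt g (minimalPeriod f a) b := by
      have := isPeriodicPt_minimalPeriod f a
      simpa [IsPeriodicPt, IsFixedPt] using (H _).mp (by simpa [IsPeriodicPt, IsFixedPt] using this)
    exact le_antisymm (h1.minimalPeriod_le (minimalPeriod_pos_of_mem_periodicPts hb))
      (h2.minimalPeriod_le (minimalPeriod_pos_of_mem_periodicPts ha))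
  · rw [minimalPeriod_eq_zero_of_notMem_periodicPts (fun ha => hb (hmem.mp ha)),
      minimalPeriod_eq_zero_of_notMem_periodicPts hb]

private lemma conj_iterate {α β : Type*} (E : α ≃ β) (f : Equiv.Perm β) (k : ℕ) (a : α) :
    (⇑((E.trans f).trans E.symm))^[k] a = E.symm (f^[k] (E a)) := by
  induction k with
  | zero => simp
  | succ k ih => rw [iterate_succ_apply', ih, iterate_succ_apply']; simp

private lemma minPeriod_conj {α β : Type*} (E : α ≃ β) (f : Equiv.Perm β) (a : α) :
    minimalPeriod (⇑((E.trans f).trans E.symm)) a = minimalPeriod (⇑f) (E a) := by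
  refine minPeriod_congr fun k => ?_
  rw [conj_iterate]
  constructor
  · intro hh; have := congrArg E hh; simpa using this
  · intro hh; rw [hh]; simp

private lemma prodCongr_iterate {α β : Type*} (ρ : Equiv.Perm α) (k : ℕ) (a : α) (b : β) :
    (⇑(Equiv.prodCongr ρ (Equiv.refl β)))^[k] (a, b) = (ρ^[k] a, b) := by
  induction k with
  | zero => simp
  | succ k ih =>
      rw [iterate_succ_apply', iterate_succ_apply', ih]
      simp

private lemma minPeriod_prodCongr {α β : Type*} (ρ : Equiv.Perm α) (a : α) (b : β) :
    minimalPeriod (⇑(Equiv.prodCongr ρ (Equiv.refl β))) (a, b) = minimalPeriod (⇑ρ) a := by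
  refine minPeriod_congr fun k => ?_
  rw [prodCongr_iterate]
  constructor
  · intro hh
    have h1 := congrArg Prod.fst hh
    simp only at h1
    rw [h1]
  · intro hh; rw [hh]

/-! ### Abstract doubling gadget minimal period -/

section Gadget

variable {Q G L : ℕ} [NeZero Q] [NeZero G] [NeZero L]

private abbrev Pt (Q G L : ℕ) := (ZMod 2 × ZMod Q) × (ZMod G × ZMod L)

private lemma gadget_iterate_even (γ : Equiv.Perm (Pt Q G L)) (β : ZMod Q)
    (hsq : ∀ p, γ (γ p) = ((p.1.1, p.1.2 + β), p.2)) (k : ℕ) (p : Pt Q G L) :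
    (⇑γ)^[2*k] p = ((p.1.1, p.1.2 + k • β), p.2) := by
  induction k with
  | zero => simp
  | succ k ih =>
    have : 2*(k+1) = 2 + 2*k := by ring
    rw [this, iterate_add_apply, ih]
    have h2 : (⇑γ)^[2] = fun q => γ (γ q) := by
      funext q; simp [iterate_succ_apply']
    show γ (γ _) = _
    rw [hsq]
    simp only [succ_nsmul]
    rw [add_assoc]

private lemma gadget_minPeriod (γ : Equiv.Perm (Pt Q G L)) (β : ZMod Q)
    (hsq : ∀ p, γ (γ p) = ((p.1.1, p.1.2 + β), p.2))
    (hmv : ∀ p, (γ p).2.2 ≠ p.2.2) (p : Pt Q G L) :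
    minimalPeriod (⇑γ) p = 2 * addOrderOf β := by
  set M := addOrderOf β with hM
  have hMpos : 0 < M := addOrderOf_pos β
  have hper : IsPeriodicPt (⇑γ) (2*M) p := by
    show (⇑γ)^[2*M] p = p
    rw [gadget_iterate_even γ β hsq]
    rw [hM, addOrderOf_nsmul_eq_zero β]
    simp
  have hpos : 0 < minimalPeriod (⇑γ) p :=
    minimalPeriod_pos_of_mem_periodicPts ⟨2*M, by positivity, hper⟩
  have hdvd : minimalPeriod (⇑γ) p ∣ 2*M := hper.minimalPeriod_dvd
  have heven : ∀ j, ¬ IsPeriodicPt (⇑γ) (2*j+1) p := by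
    intro j hj
    have h1 : (⇑γ)^[2*j+1] p = γ ((⇑γ)^[2*j] p) := by
      rw [add_comm, iterate_add_apply]; simp
    have h2 := gadget_iterate_even γ β hsq j p
    have h3 : ((⇑γ)^[2*j+1] p).2.2 ≠ p.2.2 := by
      rw [h1, h2]; exact hmv _
    exact h3 (by rw [hj.eq])
  -- minimal period is even, say 2j, and then M ∣ j
  rcases Nat.even_or_odd (minimalPeriod (⇑γ) p) with he | ho
  · obtain ⟨j, hj⟩ := he
    have hper2 : IsPeriodicPt (⇑γ) (2*j) p := by
      rw [(by omega : 2*j = minimalPeriod (⇑γ) p)]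
      exact isPeriodicPt_minimalPeriod _ _
    have : ((p.1.1, p.1.2 + j • β), p.2) = p := by
      rw [← gadget_iterate_even γ β hsq]; exact hper2.eq
    have hj0 : j • β = 0 := by
      have := congrArg (fun q => q.1.2) this
      simpa using this
    have hMj : M ∣ j := addOrderOf_dvd_of_nsmul_eq_zero hj0
    have : 2*M ∣ minimalPeriod (⇑γ) p := by
      rw [(by omega : minimalPeriod (⇑γ) p = 2*j)]
      exact mul_dvd_mul_left 2 hMj
    exact Nat.dvd_antisymm hdvd this
  · obtain ⟨j, hj⟩ := ho
    exact absurd (hj ▸ isPeriodicPt_minimalPeriod (⇑γ) p) (heven j)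

end Gadget


section Gadget2
set_option linter.unusedSectionVars false

variable {Q G L : ℕ} [NeZero Q] [NeZero G] [NeZero L]


/-- parity pattern for the cycle gadget -/
private def muF (L : ℕ) (e : ZMod 2 × ZMod 2) (j : ZMod L) : ZMod 2 :=
  if j.val = L - 1 then e.1 + e.2 else if j.val % 2 = 0 then e.1 else e.2

private lemma zmod2_one_add_ne (a : ZMod 2) : ¬ (1 + a = a) := by revert a; decide
private lemma zmod2_ne_iff {a b : ZMod 2} (h : ¬ (a = b)) : a = 1 + b := by
  revert h; revert a b; decide

private def cycF (e : ZMod 2 × ZMod 2) (c β : ZMod Q) (p : Pt Q G L) : Pt Q G L :=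
  if p.1.1 = muF L e p.2.2
    then ((1 + muF L e (p.2.2 + 1), p.1.2 + c), (p.2.1, p.2.2 + 1))
    else ((muF L e (p.2.2 - 1), p.1.2 + β - c), (p.2.1, p.2.2 - 1))

private def cycFi (e : ZMod 2 × ZMod 2) (c β : ZMod Q) (p : Pt Q G L) : Pt Q G L :=
  if p.1.1 = muF L e p.2.2
    then ((1 + muF L e (p.2.2 + 1), p.1.2 + c - β), (p.2.1, p.2.2 + 1))
    else ((muF L e (p.2.2 - 1), p.1.2 - c), (p.2.1, p.2.2 - 1))

private lemma cycF_pos (e : ZMod 2 × ZMod 2) (c β : ZMod Q) {ε : ZMod 2} {q : ZMod Q}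
    {cc : ZMod G} {i : ZMod L} (hp : ε = muF L e i) :
    cycF e c β ((ε, q), (cc, i)) = ((1 + muF L e (i + 1), q + c), (cc, i + 1)) := by
  unfold cycF; rw [if_pos (by simpa using hp)]

private lemma cycF_neg (e : ZMod 2 × ZMod 2) (c β : ZMod Q) {ε : ZMod 2} {q : ZMod Q}
    {cc : ZMod G} {i : ZMod L} (hp : ¬ ε = muF L e i) :
    cycF e c β ((ε, q), (cc, i)) = ((muF L e (i - 1), q + β - c), (cc, i - 1)) := by
  unfold cycF; rw [if_neg (by simpa using hp)]

private lemma cycFi_pos (e : ZMod 2 × ZMod 2) (c β : ZMod Q) {ε : ZMod 2} {q : ZMod Q}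
    {cc : ZMod G} {i : ZMod L} (hp : ε = muF L e i) :
    cycFi e c β ((ε, q), (cc, i)) = ((1 + muF L e (i + 1), q + c - β), (cc, i + 1)) := by
  unfold cycFi; rw [if_pos (by simpa using hp)]

private lemma cycFi_neg (e : ZMod 2 × ZMod 2) (c β : ZMod Q) {ε : ZMod 2} {q : ZMod Q}
    {cc : ZMod G} {i : ZMod L} (hp : ¬ ε = muF L e i) :
    cycFi e c β ((ε, q), (cc, i)) = ((muF L e (i - 1), q - c), (cc, i - 1)) := by
  unfold cycFi; rw [if_neg (by simpa using hp)]

/-- The cycle-block gadget permutation. -/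
private def cycG (e : ZMod 2 × ZMod 2) (c β : ZMod Q) : Equiv.Perm (Pt Q G L) where
  toFun := cycF e c β
  invFun := cycFi e c β
  left_inv := by
    rintro ⟨⟨ε, q⟩, ⟨cc, i⟩⟩
    by_cases hp : ε = muF L e i
    · rw [cycF_pos e c β hp, cycFi_neg e c β (zmod2_one_add_ne _), add_sub_cancel_right,
        add_sub_cancel_right, ← hp]
    · rw [cycF_neg e c β hp, cycFi_pos e c β rfl, sub_add_cancel, ← zmod2_ne_iff hp]
      congr 1; congr 1; ring
  right_inv := by
    rintro ⟨⟨ε, q⟩, ⟨cc, i⟩⟩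
    by_cases hp : ε = muF L e i
    · rw [cycFi_pos e c β hp, cycF_neg e c β (zmod2_one_add_ne _), add_sub_cancel_right,
        ← hp]
      congr 1; congr 1; ring
    · rw [cycFi_neg e c β hp, cycF_pos e c β rfl, sub_add_cancel, ← zmod2_ne_iff hp,
        sub_add_cancel]

private lemma cycG_apply (e : ZMod 2 × ZMod 2) (c β : ZMod Q) (p : Pt Q G L) :
    (cycG e c β) p = cycF e c β p := rfl

private lemma cycG_sq (e : ZMod 2 × ZMod 2) (c β : ZMod Q) (p : Pt Q G L) :
    (cycG e c β) ((cycG e c β) p) = ((p.1.1, p.1.2 + β), p.2) := by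
  obtain ⟨⟨ε, q⟩, ⟨cc, i⟩⟩ := p
  rw [cycG_apply, cycG_apply]
  by_cases hp : ε = muF L e i
  · rw [cycF_pos e c β hp, cycF_neg e c β (zmod2_one_add_ne _), add_sub_cancel_right,
      ← hp]
    congr 1; congr 1; ring
  · rw [cycF_neg e c β hp, cycF_pos e c β rfl, sub_add_cancel, ← zmod2_ne_iff hp]
    congr 1; congr 1; ring

private lemma cycG_col (e : ZMod 2 × ZMod 2) (c β : ZMod Q) (p : Pt Q G L) :
    ((cycG e c β) p).2.1 = p.2.1 ∧
      (((cycG e c β) p).2.2 = p.2.2 + 1 ∨ ((cycG e c β) p).2.2 = p.2.2 - 1) := by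
  obtain ⟨⟨ε, q⟩, ⟨cc, i⟩⟩ := p
  rw [cycG_apply]
  by_cases hp : ε = muF L e i
  · rw [cycF_pos e c β hp]; exact ⟨rfl, Or.inl rfl⟩
  · rw [cycF_neg e c β hp]; exact ⟨rfl, Or.inr rfl⟩

private lemma zmodL_one_ne_zero (hL : 2 ≤ L) : (1 : ZMod L) ≠ 0 := by
  intro hc
  have := congrArg ZMod.val hc
  rw [ZMod.val_one_eq_one_mod, ZMod.val_zero, Nat.mod_eq_of_lt (by omega)] at this
  omega

private lemma cycG_move (e : ZMod 2 × ZMod 2) (c β : ZMod Q) (hL : 2 ≤ L) (p : Pt Q G L) :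
    ((cycG e c β) p).2.2 ≠ p.2.2 := by
  rcases (cycG_col e c β p).2 with hc | hc <;> rw [hc]
  · intro hx; exact zmodL_one_ne_zero hL (by linear_combination hx)
  · intro hx; exact zmodL_one_ne_zero hL (by linear_combination -hx)


private lemma zmod2_flip {a b : ZMod 2} (h : a ≠ b) : b = 1 + a := by
  revert h; revert a b; decide

private lemma muF_pair_inj (hL : 3 ≤ L) (i : ZMod L) {e e' : ZMod 2 × ZMod 2}
    (h1 : muF L e i = muF L e' i) (h2 : muF L e (i+1) = muF L e' (i+1)) : e = e' := by
  have hv : i.val < L := ZMod.val_lt i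
  have hone : (1 : ZMod L).val = 1 := by
    rw [ZMod.val_one_eq_one_mod, Nat.mod_eq_of_lt (by omega)]
  have hadd : (i+1).val = (i.val + 1) % L := by rw [ZMod.val_add, hone]
  unfold muF at h1 h2
  by_cases hA : i.val = L - 1
  · have hB : (i+1).val = 0 := by
      rw [hadd, (by omega : i.val + 1 = L), Nat.mod_self]
    rw [if_pos hA, if_pos hA] at h1
    rw [hB, if_neg (show ¬ (0:ℕ) = L - 1 by omega), if_neg (show ¬ (0:ℕ) = L - 1 by omega),
        if_pos (show (0:ℕ) % 2 = 0 by omega), if_pos (show (0:ℕ) % 2 = 0 by omega)] at h2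
    have : e.2 = e'.2 := by
      have := h1; rw [h2] at this; exact add_left_cancel this
    exact Prod.ext h2 this
  · have hB : (i+1).val = i.val + 1 := by
      rw [hadd, Nat.mod_eq_of_lt (by omega)]
    rw [if_neg hA, if_neg hA] at h1
    rw [hB] at h2
    by_cases hC : i.val + 1 = L - 1
    · rw [if_pos hC, if_pos hC] at h2
      by_cases hp : i.val % 2 = 0
      · rw [if_pos hp, if_pos hp] at h1
        have : e.2 = e'.2 := by
          have := h2; rw [h1] at this; exact add_left_cancel this
        exact Prod.ext h1 this
      · rw [if_neg hp, if_neg hp] at h1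
        have : e.1 = e'.1 := by
          have h2' : e.2 + e.1 = e'.2 + e'.1 := by
            rw [add_comm e.2, add_comm e'.2]; exact h2
          rw [h1] at h2'; exact add_left_cancel h2'
        exact Prod.ext this h1
    · rw [if_neg hC, if_neg hC] at h2
      by_cases hp : i.val % 2 = 0
      · rw [if_pos hp, if_pos hp] at h1
        rw [if_neg (show ¬ (i.val+1) % 2 = 0 by omega), if_neg (show ¬ (i.val+1) % 2 = 0 by omega)] at h2
        exact Prod.ext h1 h2
      · rw [if_neg hp, if_neg hp] at h1
        rw [if_pos (show (i.val+1) % 2 = 0 by omega), if_pos (show (i.val+1) % 2 = 0 by omega)] at h2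
        exact Prod.ext h2 h1

private lemma zmodL_two_ne (hL : 3 ≤ L) {i : ZMod L} : i + 1 ≠ i - 1 := by
  intro hc
  have h2 : ((2 : ℕ) : ZMod L) = 0 := by push_cast; linear_combination hc
  have := (ZMod.natCast_eq_zero_iff 2 L).mp h2
  have := Nat.le_of_dvd (by norm_num) this
  omega

private lemma cycG_ne (hL : 3 ≤ L) {e e' : ZMod 2 × ZMod 2} {c c' β β' : ZMod Q}
    (hcond : e ≠ e' ∨ (β = β' ∧ c ≠ c')) (p : Pt Q G L) :
    (cycG e c β) p ≠ (cycG e' c' β') p := by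
  obtain ⟨⟨ε, q⟩, ⟨cc, i⟩⟩ := p
  rw [cycG_apply, cycG_apply]
  by_cases hp : ε = muF L e i <;> by_cases hp' : ε = muF L e' i
  · rw [cycF_pos _ _ _ hp, cycF_pos _ _ _ hp']
    intro hc
    have h1 : muF L e i = muF L e' i := hp ▸ hp'
    have h2 : 1 + muF L e (i+1) = 1 + muF L e' (i+1) := congrArg (fun z => z.1.1) hc
    have h3 : q + c = q + c' := congrArg (fun z => z.1.2) hc
    have he : e = e' := muF_pair_inj hL i h1 (add_left_cancel h2)
    rcases hcond with h | ⟨_, hcc⟩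
    · exact h he
    · exact hcc (add_left_cancel h3)
  · rw [cycF_pos _ _ _ hp, cycF_neg _ _ _ hp']
    intro hc
    exact zmodL_two_ne hL (congrArg (fun z => z.2.2) hc)
  · rw [cycF_neg _ _ _ hp, cycF_pos _ _ _ hp']
    intro hc
    exact zmodL_two_ne hL (congrArg (fun z => z.2.2) hc).symm
  · rw [cycF_neg _ _ _ hp, cycF_neg _ _ _ hp']
    intro hc
    have h1 : muF L e i = muF L e' i := by rw [zmod2_flip hp, zmod2_flip hp']
    have h2 : muF L e (i-1) = muF L e' (i-1) := congrArg (fun z => z.1.1) hc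
    have h2' : muF L e ((i-1)+1) = muF L e' ((i-1)+1) := by
      rw [sub_add_cancel]; exact h1
    have he : e = e' := muF_pair_inj hL (i-1) h2 h2'
    rcases hcond with h | ⟨hbb, hcc⟩
    · exact h he
    · have h3 : q + β - c = q + β' - c' := congrArg (fun z => z.1.2) hc
      rw [hbb] at h3
      exact hcc (sub_right_injective h3)

/-! ### matching gadget (for x even, d = x/2) -/

private lemma zmod2_cases (a : ZMod 2) : a = 0 ∨ a = 1 := by revert a; decide
private lemma zmod2_11 : (1 : ZMod 2) + 1 = 0 := by decide
private lemma zmod2_addadd (a b : ZMod 2) : a + b + b = a := by revert a b; decide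

private def matF (e0 : ZMod 2) (c β : ZMod Q) (p : Pt Q G 2) : Pt Q G 2 :=
  ((p.1.1 + e0, p.1.2 + (if p.2.2 = 0 then c else β - c)), (p.2.1, p.2.2 + 1))

private def matFi (e0 : ZMod 2) (c β : ZMod Q) (p : Pt Q G 2) : Pt Q G 2 :=
  ((p.1.1 + e0, p.1.2 - (if p.2.2 = 0 then β - c else c)), (p.2.1, p.2.2 + 1))

private lemma matF0 (e0 : ZMod 2) (c β : ZMod Q) (ε : ZMod 2) (q : ZMod Q) (cc : ZMod G) :
    matF e0 c β ((ε,q),(cc,0)) = ((ε+e0, q+c),(cc,1)) := by simp [matF]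
private lemma matF1 (e0 : ZMod 2) (c β : ZMod Q) (ε : ZMod 2) (q : ZMod Q) (cc : ZMod G) :
    matF e0 c β ((ε,q),(cc,1)) = ((ε+e0, q+(β-c)),(cc,0)) := by simp [matF, zmod2_11]
private lemma matFi0 (e0 : ZMod 2) (c β : ZMod Q) (ε : ZMod 2) (q : ZMod Q) (cc : ZMod G) :
    matFi e0 c β ((ε,q),(cc,0)) = ((ε+e0, q-(β-c)),(cc,1)) := by simp [matFi]
private lemma matFi1 (e0 : ZMod 2) (c β : ZMod Q) (ε : ZMod 2) (q : ZMod Q) (cc : ZMod G) :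
    matFi e0 c β ((ε,q),(cc,1)) = ((ε+e0, q-c),(cc,0)) := by simp [matFi, zmod2_11]

private def matG (e0 : ZMod 2) (c β : ZMod Q) : Equiv.Perm (Pt Q G 2) where
  toFun := matF e0 c β
  invFun := matFi e0 c β
  left_inv := by
    rintro ⟨⟨ε, q⟩, ⟨cc, i⟩⟩
    rcases zmod2_cases i with hi | hi <;> subst hi
    · rw [matF0, matFi1, zmod2_addadd, add_sub_cancel_right]
    · rw [matF1, matFi0, zmod2_addadd, add_sub_cancel_right]
  right_inv := by
    rintro ⟨⟨ε, q⟩, ⟨cc, i⟩⟩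
    rcases zmod2_cases i with hi | hi <;> subst hi
    · rw [matFi0, matF1, zmod2_addadd, sub_add_cancel]
    · rw [matFi1, matF0, zmod2_addadd, sub_add_cancel]

private lemma matG_apply (e0 : ZMod 2) (c β : ZMod Q) (p : Pt Q G 2) :
    (matG e0 c β) p = matF e0 c β p := rfl

private lemma matG_sq (e0 : ZMod 2) (c β : ZMod Q) (p : Pt Q G 2) :
    (matG e0 c β) ((matG e0 c β) p) = ((p.1.1, p.1.2 + β), p.2) := by
  obtain ⟨⟨ε, q⟩, ⟨cc, i⟩⟩ := p
  rw [matG_apply, matG_apply]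
  rcases zmod2_cases i with hi | hi <;> subst hi
  · rw [matF0, matF1, zmod2_addadd]
    congr 2
    ring
  · rw [matF1, matF0, zmod2_addadd]
    congr 2
    ring

private lemma matG_move (e0 : ZMod 2) (c β : ZMod Q) (p : Pt Q G 2) :
    ((matG e0 c β) p).2.2 ≠ p.2.2 := by
  show p.2.2 + 1 ≠ p.2.2
  rcases zmod2_cases p.2.2 with hi | hi <;> rw [hi] <;> decide

private lemma matG_col (e0 : ZMod 2) (c β : ZMod Q) (p : Pt Q G 2) :
    ((matG e0 c β) p).2.1 = p.2.1 ∧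
      (((matG e0 c β) p).2.2 = p.2.2 + 1 ∨ ((matG e0 c β) p).2.2 = p.2.2 - 1) :=
  ⟨rfl, Or.inl rfl⟩

private lemma matG_ne {e0 e0' : ZMod 2} {c c' β β' : ZMod Q}
    (hcond : e0 ≠ e0' ∨ (β = β' ∧ c ≠ c')) (p : Pt Q G 2) :
    (matG e0 c β) p ≠ (matG e0' c' β') p := by
  obtain ⟨⟨ε, q⟩, ⟨cc, i⟩⟩ := p
  rw [matG_apply, matG_apply]
  unfold matF
  intro hc
  have h1 : ε + e0 = ε + e0' := congrArg (fun z => z.1.1) hc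
  have h2 : q + (if i = 0 then c else β - c) = q + (if i = 0 then c' else β' - c') :=
    congrArg (fun z => z.1.2) hc
  rcases hcond with hA | ⟨hbb, hcc⟩
  · exact hA (add_left_cancel h1)
  · subst hbb
    apply hcc
    rcases zmod2_cases i with hi | hi <;> subst hi
    · rw [if_pos rfl, if_pos rfl] at h2
      exact add_left_cancel h2
    · rw [if_neg (by decide), if_neg (by decide)] at h2
      exact sub_right_injective (add_left_cancel h2)

end Gadget2

/-! ### column coordinates -/

section Columns
set_option linter.unusedSectionVars false

variable (x d g L : ℕ) [NeZero x] [NeZero g] [NeZero L]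

private def psiF (p : ZMod g × ZMod L) : ZMod x :=
  ((p.1.val + d * p.2.val : ℕ) : ZMod x)

variable {x d g L}

private lemma psi_cast_mod (hgL : g * L = x) (hgd : g ∣ d) (a : ℕ) :
    ((d * (a % L) : ℕ) : ZMod x) = ((d * a : ℕ) : ZMod x) := by
  have hxdL : (x : ℕ) ∣ d * L := by
    obtain ⟨d', rfl⟩ := hgd
    exact ⟨d', by rw [← hgL]; ring⟩
  conv_rhs => rw [← Nat.mod_add_div a L]
  have h0 : ((d * L : ℕ) : ZMod x) = 0 := (ZMod.natCast_eq_zero_iff _ _).mpr hxdL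
  calc ((d * (a % L) : ℕ) : ZMod x)
      = ((d * (a % L) : ℕ) : ZMod x) + ((d * L : ℕ) : ZMod x) * ((a / L : ℕ) : ZMod x) := by
        rw [h0]; ring
    _ = ((d * (a % L + L * (a / L)) : ℕ) : ZMod x) := by push_cast; ring

private lemma psi_step (hL2 : 2 ≤ L) (hgL : g * L = x) (hgd : g ∣ d)
    (c : ZMod g) (i : ZMod L) :
    psiF x d g L (c, i + 1) = psiF x d g L (c, i) + (d : ZMod x) := by
  have hone : (1 : ZMod L).val = 1 := by
    rw [ZMod.val_one_eq_one_mod, Nat.mod_eq_of_lt (by omega)]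
  have hadd : (i + 1).val = (i.val + 1) % L := by rw [ZMod.val_add, hone]
  show ((c.val + d * (i+1).val : ℕ) : ZMod x) = ((c.val + d * i.val : ℕ) : ZMod x) + (d : ZMod x)
  rw [hadd]
  calc ((c.val + d * ((i.val + 1) % L) : ℕ) : ZMod x)
      = ((c.val : ℕ) : ZMod x) + ((d * ((i.val+1) % L) : ℕ) : ZMod x) := by push_cast; ring
    _ = ((c.val : ℕ) : ZMod x) + ((d * (i.val+1) : ℕ) : ZMod x) := by
        rw [psi_cast_mod hgL hgd]
    _ = ((c.val + d * i.val : ℕ) : ZMod x) + (d : ZMod x) := by push_cast; ring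

private lemma psi_step' (hL2 : 2 ≤ L) (hgL : g * L = x) (hgd : g ∣ d)
    (c : ZMod g) (i : ZMod L) :
    psiF x d g L (c, i - 1) = psiF x d g L (c, i) - (d : ZMod x) := by
  have := psi_step hL2 hgL hgd c (i - 1)
  rw [sub_add_cancel] at this
  rw [this]; ring

private lemma psi_inj_aux (hgL : g * L = x) (hgd : g ∣ d) (hg0 : 0 < g)
    (hco : Nat.Coprime L (d / g)) {i i' : ZMod L} (hle : i.val ≤ i'.val)
    (hmm : d * i.val ≡ d * i'.val [MOD x]) : i = i' := by
  have hdg : g * (d / g) = d := Nat.mul_div_cancel' hgd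
  have hdvd : x ∣ d * i'.val - d * i.val :=
    (Nat.modEq_iff_dvd' (Nat.mul_le_mul_left d hle)).mp hmm
  rw [← Nat.mul_sub] at hdvd
  have h2 : g * L ∣ g * ((d / g) * (i'.val - i.val)) := by
    rw [hgL, ← mul_assoc, hdg]; exact hdvd
  have h3 : L ∣ (d / g) * (i'.val - i.val) :=
    (mul_dvd_mul_iff_left (by omega : g ≠ 0)).mp h2
  have h4 : L ∣ i'.val - i.val := hco.dvd_of_dvd_mul_left h3
  have h5 : i'.val - i.val = 0 :=
    Nat.eq_zero_of_dvd_of_lt h4 (by have := ZMod.val_lt i'; omega)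
  exact ZMod.val_injective L (by omega)

private lemma psi_inj (hgL : g * L = x) (hgd : g ∣ d) (hg0 : 0 < g)
    (hco : Nat.Coprime L (d / g)) :
    Function.Injective (psiF x d g L) := by
  rintro ⟨c, i⟩ ⟨c', i'⟩ hcc
  have hmod : c.val + d * i.val ≡ c'.val + d * i'.val [MOD x] :=
    (ZMod.natCast_eq_natCast_iff _ _ _).mp hcc
  have hgx : g ∣ x := ⟨L, hgL.symm⟩
  have hdg : g * (d / g) = d := Nat.mul_div_cancel' hgd
  have hmodg : c.val + d * i.val ≡ c'.val + d * i'.val [MOD g] := hmod.of_dvd hgx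
  have hcc' : c = c' := by
    have e1 : (c.val + d * i.val) % g = c.val % g := by
      rw [← hdg, mul_assoc, Nat.add_mul_mod_self_left]
    have e2 : (c'.val + d * i'.val) % g = c'.val % g := by
      rw [← hdg, mul_assoc, Nat.add_mul_mod_self_left]
    have : c.val % g = c'.val % g := by
      have := hmodg; unfold Nat.ModEq at this; rw [e1, e2] at this; exact this
    apply ZMod.val_injective
    rw [← Nat.mod_eq_of_lt (ZMod.val_lt c), ← Nat.mod_eq_of_lt (ZMod.val_lt c'), this]
  subst hcc'
  have hmm : d * i.val ≡ d * i'.val [MOD x] :=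
    (Nat.ModEq.refl c.val).add_left_cancel hmod
  rcases le_total i.val i'.val with hle | hle
  · rw [psi_inj_aux hgL hgd hg0 hco hle hmm]
  · rw [psi_inj_aux hgL hgd hg0 hco hle hmm.symm]

private noncomputable def psiE (x d g L : ℕ) [NeZero x] [NeZero g] [NeZero L]
    (hgL : g * L = x) (hgd : g ∣ d) (hg0 : 0 < g) (hco : Nat.Coprime L (d / g)) :
    (ZMod g × ZMod L) ≃ ZMod x :=
  Equiv.ofBijective (psiF x d g L)
    ((Fintype.bijective_iff_injective_and_card _).mpr
      ⟨psi_inj hgL hgd hg0 hco, by simp [ZMod.card]; exact hgL⟩)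

private lemma psiE_apply (x d g L : ℕ) [NeZero x] [NeZero g] [NeZero L]
    (hgL : g * L = x) (hgd : g ∣ d) (hg0 : 0 < g) (hco : Nat.Coprime L (d / g))
    (p : ZMod g × ZMod L) :
    psiE x d g L hgL hgd hg0 hco p = psiF x d g L p := rfl

end Columns

/-! ### conjugation the other way -/

private lemma conj2_iterate {α β : Type*} (E : β ≃ α) (f : Equiv.Perm β) (k : ℕ) (a : α) :
    (⇑((E.symm.trans f).trans E))^[k] a = E (f^[k] (E.symm a)) := by
  induction k with
  | zero => simp
  | succ k ih => rw [Function.iterate_succ_apply', ih, Function.iterate_succ_apply']; simp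

private lemma minPeriod_conj2 {α β : Type*} (E : β ≃ α) (f : Equiv.Perm β) (a : α) :
    Function.minimalPeriod (⇑((E.symm.trans f).trans E)) a
      = Function.minimalPeriod (⇑f) (E.symm a) := by
  refine minPeriod_congr fun k => ?_
  rw [conj2_iterate]
  constructor
  · intro hh; have := congrArg E.symm hh; simpa using this
  · intro hh; rw [hh]; simp

private lemma conj2_apply {α β : Type*} (E : β ≃ α) (f : Equiv.Perm β) (a : α) :
    ((E.symm.trans f).trans E) a = E (f (E.symm a)) := rfl

/-! ### injectivity of class encodings -/

private lemma eOf_inj {a b : ℕ} (ha : a < 4) (hb : b < 4) (hab : a ≠ b) :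
    (((a/2 : ℕ) : ZMod 2), ((a % 2 : ℕ) : ZMod 2)) ≠
      (((b/2 : ℕ) : ZMod 2), ((b % 2 : ℕ) : ZMod 2)) := by
  interval_cases a <;> interval_cases b <;> first | omega | decide

private lemma e2_inj {a b : ℕ} (ha : a < 2) (hb : b < 2) (hab : a ≠ b) :
    ((a : ℕ) : ZMod 2) ≠ ((b : ℕ) : ZMod 2) := by
  interval_cases a <;> interval_cases b <;> first | omega | decide

private lemma ncast_inj {Q : ℕ} [NeZero Q] {a b : ℕ} (ha : a < Q) (hb : b < Q) (hab : a ≠ b) :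
    ((a : ℕ) : ZMod Q) ≠ ((b : ℕ) : ZMod Q) := by
  intro hc
  have := congrArg ZMod.val hc
  rw [ZMod.val_natCast_of_lt ha, ZMod.val_natCast_of_lt hb] at this
  exact hab this

/-! ### the block permutations on the working vertex set -/

private lemma blockPerm_exists (Q x : ℕ) [NeZero Q] [NeZero x] (d : ℕ) :
    ∃ B : ℕ → ℕ → ZMod Q → Equiv.Perm ((ZMod 2 × ZMod Q) × ZMod x),
      1 ≤ d → 2*d ≤ x →
      ((∀ cls c β w, Function.minimalPeriod (⇑(B cls c β)) w = 2 * addOrderOf β) ∧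
       (∀ cls c β w, ((B cls c β) w).2 = w.2 + (d : ZMod x) ∨
          ((B cls c β) w).2 = w.2 - (d : ZMod x)) ∧
       (∀ cls cls' c c' β β' w, cls < 4 → cls' < 4 → c < Q → c' < Q →
         (x / x.gcd d = 2 → cls < 2 ∧ cls' < 2) →
         (cls ≠ cls' ∨ (β = β' ∧ c ≠ c')) → (B cls c β) w ≠ (B cls' c' β') w)) := by
  by_cases hcase : 1 ≤ d ∧ 2*d ≤ x
  swap
  · exact ⟨fun _ _ _ => 1, fun h1 h2 => absurd ⟨h1, h2⟩ hcase⟩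
  obtain ⟨hd1, hd2⟩ := hcase
  have hx2 : 2 ≤ x := by omega
  set g := x.gcd d with hgdef
  set L := x / g with hLdef
  have hxpos : 0 < x := by omega
  have hg0 : 0 < g := Nat.gcd_pos_of_pos_left d hxpos
  haveI : NeZero g := ⟨by omega⟩
  have hgx : g ∣ x := Nat.gcd_dvd_left x d
  have hgd : g ∣ d := Nat.gcd_dvd_right x d
  have hgL : g * L = x := Nat.mul_div_cancel' hgx
  have hco : Nat.Coprime L (d / g) := Nat.coprime_div_gcd_div_gcd hg0
  have hL2 : 2 ≤ L := by
    rcases Nat.lt_or_ge L 2 with hl | hl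
    · interval_cases L
      · omega
      · -- L = 1 : g = x divides d, but d < x
        have hxg : g = x := by omega
        have : x ∣ d := hxg ▸ hgd
        have := Nat.le_of_dvd (by omega) this
        omega
    · exact hl
  haveI : NeZero L := ⟨by omega⟩
  by_cases hL3 : 3 ≤ L
  · -- cycle block
    let E : Pt Q g L ≃ ((ZMod 2 × ZMod Q) × ZMod x) :=
      Equiv.prodCongr (Equiv.refl _) (psiE x d g L hgL hgd hg0 hco)
    refine ⟨fun cls c β =>
      (E.symm.trans (cycG (((cls/2 : ℕ) : ZMod 2), ((cls % 2 : ℕ) : ZMod 2)) (c : ZMod Q) β)).trans E,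
      fun _ _ => ⟨?_, ?_, ?_⟩⟩
    · intro cls c β w
      rw [minPeriod_conj2]
      exact gadget_minPeriod _ β (cycG_sq _ _ _) (cycG_move _ _ _ (by omega)) _
    · intro cls c β w
      rw [conj2_apply]
      set p := E.symm w with hp
      have hw2 : w.2 = psiF x d g L p.2 := by
        conv_lhs => rw [← Equiv.apply_symm_apply E w]
        rfl
      obtain ⟨hc1, hc2⟩ := cycG_col (((cls/2 : ℕ) : ZMod 2), ((cls % 2 : ℕ) : ZMod 2)) (c : ZMod Q) β p
      rcases hc2 with hc2 | hc2
      · left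
        show psiF x d g L ((cycG (((cls/2 : ℕ) : ZMod 2), ((cls % 2 : ℕ) : ZMod 2)) (c : ZMod Q) β) p).2 = w.2 + (d : ZMod x)
        have : ((cycG (((cls/2 : ℕ) : ZMod 2), ((cls % 2 : ℕ) : ZMod 2)) (c : ZMod Q) β) p).2
            = (p.2.1, p.2.2 + 1) := Prod.ext hc1 hc2
        rw [this, psi_step hL2 hgL hgd, ← hw2]
      · right
        show psiF x d g L ((cycG (((cls/2 : ℕ) : ZMod 2), ((cls % 2 : ℕ) : ZMod 2)) (c : ZMod Q) β) p).2 = w.2 - (d : ZMod x)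
        have : ((cycG (((cls/2 : ℕ) : ZMod 2), ((cls % 2 : ℕ) : ZMod 2)) (c : ZMod Q) β) p).2
            = (p.2.1, p.2.2 - 1) := Prod.ext hc1 hc2
        rw [this, psi_step' hL2 hgL hgd, ← hw2]
    · intro cls cls' c c' β β' w h4 h4' hcQ hcQ' _ hcond
      rw [conj2_apply, conj2_apply]
      intro hc
      have := E.injective hc
      refine cycG_ne hL3 ?_ (E.symm w) this
      rcases hcond with hne | ⟨hb, hcc⟩
      · exact Or.inl (eOf_inj h4 h4' hne)
      · exact Or.inr ⟨hb, ncast_inj hcQ hcQ' hcc⟩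
  · -- matching block
    have hL2' : L = 2 := by omega
    have hgL2 : g * 2 = x := by rw [← hL2']; exact hgL
    have hco2 : Nat.Coprime 2 (d / g) := hL2' ▸ hco
    let E : Pt Q g 2 ≃ ((ZMod 2 × ZMod Q) × ZMod x) :=
      Equiv.prodCongr (Equiv.refl _) (psiE x d g 2 hgL2 hgd hg0 hco2)
    refine ⟨fun cls c β =>
      (E.symm.trans (matG ((cls : ℕ) : ZMod 2) (c : ZMod Q) β)).trans E,
      fun _ _ => ⟨?_, ?_, ?_⟩⟩
    · intro cls c β w
      rw [minPeriod_conj2]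
      exact gadget_minPeriod _ β (matG_sq _ _ _) (matG_move _ _ _) _
    · intro cls c β w
      rw [conj2_apply]
      set p := E.symm w with hp
      have hw2 : w.2 = psiF x d g 2 p.2 := by
        conv_lhs => rw [← Equiv.apply_symm_apply E w]
        rfl
      obtain ⟨hc1, hc2⟩ := matG_col ((cls : ℕ) : ZMod 2) (c : ZMod Q) β p
      rcases hc2 with hc2 | hc2
      · left
        show psiF x d g 2 ((matG ((cls : ℕ) : ZMod 2) (c : ZMod Q) β) p).2 = w.2 + (d : ZMod x)
        have : ((matG ((cls : ℕ) : ZMod 2) (c : ZMod Q) β) p).2 = (p.2.1, p.2.2 + 1) :=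
          Prod.ext hc1 hc2
        rw [this, psi_step (by omega) hgL2 hgd, ← hw2]
      · right
        show psiF x d g 2 ((matG ((cls : ℕ) : ZMod 2) (c : ZMod Q) β) p).2 = w.2 - (d : ZMod x)
        have : ((matG ((cls : ℕ) : ZMod 2) (c : ZMod Q) β) p).2 = (p.2.1, p.2.2 - 1) :=
          Prod.ext hc1 hc2
        rw [this, psi_step' (by omega) hgL2 hgd, ← hw2]
    · intro cls cls' c c' β β' w h4 h4' hcQ hcQ' hmat hcond
      rw [conj2_apply, conj2_apply]
      intro hc
      have := E.injective hc
      obtain ⟨hm1, hm2⟩ := hmat hL2'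
      refine matG_ne ?_ (E.symm w) this
      rcases hcond with hne | ⟨hb, hcc⟩
      · exact Or.inl (e2_inj hm1 hm2 hne)
      · exact Or.inr ⟨hb, ncast_inj hcQ hcQ' hcc⟩

/-! ### small helpers -/

private lemma minPeriod_fixed {α : Type*} (f : α → α) (w : α) (hf : f w = w) :
    Function.minimalPeriod f w = 1 := by
  have h1 : Function.IsPeriodicPt f 1 w := by
    simpa [Function.IsPeriodicPt, Function.IsFixedPt] using hf
  have h2 := h1.minimalPeriod_le one_pos
  have h3 := Function.minimalPeriod_pos_of_mem_periodicPts ⟨1, one_pos, h1⟩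
  omega

private noncomputable def finEquivZMod (N : ℕ) [NeZero N] : Fin N ≃ ZMod N :=
  Equiv.ofBijective (fun i => ((i : ℕ) : ZMod N))
    ((Fintype.bijective_iff_injective_and_card _).mpr
      ⟨fun a b hab => by
        have := congrArg ZMod.val hab
        rw [ZMod.val_natCast_of_lt a.2, ZMod.val_natCast_of_lt b.2] at this
        exact Fin.ext this, by simp [ZMod.card]⟩)

private def diagEquiv (α : Type*) : {p : α × α // p.1 = p.2} ≃ α where
  toFun z := z.1.1
  invFun a := ⟨(a, a), rfl⟩
  left_inv := by rintro ⟨⟨a, b⟩, h⟩; simp only at h; subst h; rfl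
  right_inv a := rfl

private lemma addOrder_beta {Q k M : ℕ} [NeZero Q] (hkM : k * M = Q) (hM : 0 < M)
    (hk : 0 < k) : addOrderOf ((k : ℕ) : ZMod Q) = M := by
  have hQpos : 0 < Q := Nat.pos_of_ne_zero (NeZero.ne Q)
  have h1 : M • ((k : ℕ) : ZMod Q) = 0 := by
    have : (M • ((k : ℕ) : ZMod Q)) = ((M * k : ℕ) : ZMod Q) := by push_cast; ring
    rw [this, (by rw [mul_comm]; exact hkM : M * k = Q)]
    exact ZMod.natCast_self Q
  have hdvd1 : addOrderOf ((k : ℕ) : ZMod Q) ∣ M := addOrderOf_dvd_of_nsmul_eq_zero h1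
  set a := addOrderOf ((k : ℕ) : ZMod Q) with ha
  have h2 : a • ((k : ℕ) : ZMod Q) = 0 := addOrderOf_nsmul_eq_zero _
  have h3 : ((a * k : ℕ) : ZMod Q) = 0 := by
    rw [← h2]; push_cast; ring
  have h4 : Q ∣ a * k := (ZMod.natCast_eq_zero_iff _ _).mp h3
  have h5 : k * M ∣ k * a := by
    rw [hkM]; exact Dvd.dvd.trans h4 (by rw [mul_comm])
  have h6 : M ∣ a := (mul_dvd_mul_iff_left (by omega : k ≠ 0)).mp h5
  exact Nat.dvd_antisymm hdvd1 h6

/-! ### assembling a solution from a family on an equivalent type -/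

private lemma build_solution {v : ℕ} {W : Type*} [Fintype W] [DecidableEq W]
    (E : Fin v ≃ W) (m n r s : ℕ) (hm : 4 ≤ m) (hn : 4 ≤ n) (hv : v = r + s + 1)
    (F : ℕ → Equiv.Perm W)
    (h1 : ∀ i, i < r → ∀ w, Function.minimalPeriod (⇑(F i)) w = m)
    (h2 : ∀ i, r ≤ i → i < r + s → ∀ w, Function.minimalPeriod (⇑(F i)) w = n)
    (h3 : ∀ i j, i < j → j < r + s → ∀ w, F i w ≠ F j w) :
    HWPStarSolution v m n r s := by
  have hfix : ∀ i, i < r + s → ∀ w, F i w ≠ w := by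
    intro i hi w hc
    have h1' := minPeriod_fixed (⇑(F i)) w hc
    rcases Nat.lt_or_ge i r with hir | hir
    · rw [h1 i hir w] at h1'; omega
    · rw [h2 i hir hi w] at h1'; omega
  have hdiff : ∀ i j, i < r + s → j < r + s → i ≠ j → ∀ w, F i w ≠ F j w := by
    intro i j hi hj hij w
    rcases Nat.lt_or_ge i j with hlt | hge
    · exact h3 i j hlt hj w
    · exact fun hc => h3 j i (by omega) hi w hc.symm
  refine ⟨fun i => (E.trans (F i.val)).trans E.symm, ?_, ?_, ?_⟩
  · intro i hir w
    rw [minPeriod_conj]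
    exact h1 i.val hir (E w)
  · intro i hir w
    rw [minPeriod_conj]
    exact h2 i.val hir i.2 (E w)
  · -- exactly one
    intro a b hab
    -- the counting map
    have hcardW : Fintype.card W = v := (Fintype.card_congr E.symm).trans (by simp)
    set Φ : Fin (r + s) × W → {p : W × W // ¬ p.1 = p.2} :=
      fun z => ⟨(z.2, F z.1.val z.2), fun hc => hfix z.1.val z.1.2 z.2 hc.symm⟩ with hΦ
    have hΦinj : Function.Injective Φ := by
      rintro ⟨i, w⟩ ⟨j, w'⟩ hc
      have hc' : (w, F i.val w) = (w', F j.val w') := congrArg Subtype.val hc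
      have hw : w = w' := congrArg Prod.fst hc'
      subst hw
      have h2' : F i.val w = F j.val w := congrArg Prod.snd hc'
      by_cases hij : i = j
      · rw [hij]
      · exact absurd h2' (hdiff i.val j.val i.2 j.2 (fun hc => hij (Fin.ext hc)) w)
    have hcards : Fintype.card (Fin (r + s) × W) = Fintype.card {p : W × W // ¬ p.1 = p.2} := by
      rw [Fintype.card_subtype_compl, Fintype.card_prod, Fintype.card_prod,
        Fintype.card_congr (diagEquiv W), hcardW, Fintype.card_fin]
      have h1 : v * v = v * (r + s) + v := by rw [hv]; ring
      have h2 : (r + s) * v = v * (r + s) := mul_comm _ _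
      omega
    have hΦbij : Function.Bijective Φ :=
      (Fintype.bijective_iff_injective_and_card Φ).mpr ⟨hΦinj, hcards⟩
    obtain ⟨⟨i, w⟩, hiw⟩ := hΦbij.2 ⟨(E a, E b), fun hc => hab (E.injective hc)⟩
    have hiw' : (w, F i.val w) = (E a, E b) := congrArg Subtype.val hiw
    have hw : w = E a := congrArg Prod.fst hiw'
    have hFb : F i.val (E a) = E b := by rw [← hw]; exact congrArg Prod.snd hiw'
    refine ⟨i, ?_, ?_⟩
    · show E.symm (F i.val (E a)) = b
      rw [hFb]; simp
    · intro j hj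
      have hj' : F j.val (E a) = E b := by
        have : E ((E.trans (F j.val)).trans E.symm a) = E b := congrArg E hj
        simpa using this
      by_contra hne
      exact hdiff j.val i.val j.2 i.2 (fun hc => hne (Fin.ext hc)) (E a) (hj'.trans hFb.symm)

private lemma cross_col_ne (x : ℕ) [NeZero x] {a b : ℕ} (ha1 : 1 ≤ a) (ha2 : 2*a ≤ x)
    (hb1 : 1 ≤ b) (hb2 : 2*b ≤ x) (hab : a ≠ b) (u : ZMod x) (p q : ZMod x)
    (hp : p = u + (a : ZMod x) ∨ p = u - (a : ZMod x))
    (hq : q = u + (b : ZMod x) ∨ q = u - (b : ZMod x)) : p ≠ q := by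
  have hc1 : (a : ZMod x) ≠ (b : ZMod x) := by
    intro hc
    have := congrArg ZMod.val hc
    rw [ZMod.val_natCast_of_lt (by omega), ZMod.val_natCast_of_lt (by omega)] at this
    omega
  have hc2 : ∀ {a' b' : ℕ}, 1 ≤ a' → 2*a' ≤ x → 1 ≤ b' → 2*b' ≤ x → a' ≠ b' →
      (a' : ZMod x) ≠ -(b' : ZMod x) := by
    intro a' b' ha1' ha2' hb1' hb2' hab' hc
    have h0 : ((a' + b' : ℕ) : ZMod x) = 0 := by push_cast; rw [hc]; ring
    have hdvd := (ZMod.natCast_eq_zero_iff _ _).mp h0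
    have := Nat.le_of_dvd (by omega) hdvd
    omega
  rcases hp with hp | hp <;> rcases hq with hq | hq <;> rw [hp, hq] <;> intro hc
  · exact hc1 (by linear_combination hc)
  · exact hc2 ha1 ha2 hb1 hb2 hab (by linear_combination hc)
  · exact hc2 hb1 hb2 ha1 ha2 (Ne.symm hab) (by linear_combination -hc)
  · exact hc1 (by linear_combination -hc)

private lemma within_col_ne (x : ℕ) [NeZero x] {a : ℕ} (ha1 : 1 ≤ a) (ha2 : 2*a ≤ x)
    (u : ZMod x) (q : ZMod x)
    (hq : q = u + (a : ZMod x) ∨ q = u - (a : ZMod x)) : u ≠ q := by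
  have hne : (a : ZMod x) ≠ 0 := by
    intro hc
    have hdvd := (ZMod.natCast_eq_zero_iff _ _).mp hc
    have := Nat.le_of_dvd (by omega) hdvd
    omega
  rcases hq with hq | hq <;> rw [hq] <;> intro hc
  · exact hne (by linear_combination -hc)
  · exact hne (by linear_combination hc)


/-- Lemma 3.2 (main even construction): for even m, n ≥ 4 with h = lcm(m, n),
if HWP*(h; m^r', n^s') is solvable for all r' + s' = h - 1, then
HWP*(hx; m^r, n^s) is solvable for all x ≥ 1 and all r + s = hx - 1. -/
theorem hwpStar_even_construction (m n : ℕ) (hm : 4 ≤ m) (hn : 4 ≤ n)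
    (hme : Even m) (hne : Even n)
    (h : ∀ r' s' : ℕ, r' + s' = Nat.lcm m n - 1 →
      HWPStarSolution (Nat.lcm m n) m n r' s') :
    ∀ x r s : ℕ, 0 < x → r + s = Nat.lcm m n * x - 1 →
      HWPStarSolution (Nat.lcm m n * x) m n r s := by
  intro x r s hxpos hrs
  haveI : NeZero x := ⟨by omega⟩
  obtain ⟨H, hH⟩ : ∃ H', Nat.lcm m n = H' := ⟨_, rfl⟩
  rw [hH] at hrs h ⊢
  have hmpos : 0 < m := by omega
  have hnpos : 0 < n := by omega
  have hHpos : 0 < H := hH ▸ Nat.lcm_pos hmpos hnpos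
  have hmH : m ∣ H := hH ▸ Nat.dvd_lcm_left m n
  have hnH : n ∣ H := hH ▸ Nat.dvd_lcm_right m n
  have h2m : 2 ∣ m := hme.two_dvd
  have h2n : 2 ∣ n := hne.two_dvd
  have h2H : 2 ∣ H := h2m.trans hmH
  have hH4 : 4 ≤ H := le_trans hm (Nat.le_of_dvd hHpos hmH)
  obtain ⟨Q, hQdef⟩ : ∃ q, q = H / 2 := ⟨_, rfl⟩
  have hQ2 : 2 * Q = H := by rw [hQdef]; exact Nat.mul_div_cancel' h2H
  have hQ2' : 2 ≤ Q := by omega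
  haveI : NeZero Q := ⟨by omega⟩
  -- additive orders
  have hmQ : (H / m) * (m / 2) = Q := by
    have e1 : 2 * (m / 2) = m := Nat.mul_div_cancel' h2m
    have e2 : (H / m) * m = H := Nat.div_mul_cancel hmH
    have e3 : 2 * ((H / m) * (m / 2)) = 2 * Q := by
      rw [(by ring : 2 * ((H / m) * (m / 2)) = (H / m) * (2 * (m / 2))), e1, e2, hQ2]
    omega
  have hnQ : (H / n) * (n / 2) = Q := by
    have e1 : 2 * (n / 2) = n := Nat.mul_div_cancel' h2n
    have e2 : (H / n) * n = H := Nat.div_mul_cancel hnH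
    have e3 : 2 * ((H / n) * (n / 2)) = 2 * Q := by
      rw [(by ring : 2 * ((H / n) * (n / 2)) = (H / n) * (2 * (n / 2))), e1, e2, hQ2]
    omega
  have hordm : addOrderOf ((H / m : ℕ) : ZMod Q) = m / 2 :=
    addOrder_beta hmQ (by omega) (Nat.div_pos (Nat.le_of_dvd hHpos hmH) hmpos)
  have hordn : addOrderOf ((H / n : ℕ) : ZMod Q) = n / 2 :=
    addOrder_beta hnQ (by omega) (Nat.div_pos (Nat.le_of_dvd hHpos hnH) hnpos)
  -- choice of t and k
  obtain ⟨k, hkdef⟩ : ∃ k', k' = min (r / Q) (2 * x - 2) := ⟨_, rfl⟩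
  have hk2x : k ≤ 2 * x - 2 := hkdef ▸ min_le_right _ _
  have hQk : Q * k ≤ r := by
    have h1 : Q * (r / Q) ≤ r := Nat.mul_div_le r Q
    rcases min_cases (r / Q) (2 * x - 2) with ⟨he, _⟩ | ⟨he, _⟩
    · rw [hkdef, he]; exact h1
    · rw [hkdef, he]
      calc Q * (2 * x - 2) ≤ Q * (r / Q) := Nat.mul_le_mul_left Q (by omega)
        _ ≤ r := h1
  obtain ⟨t, htdef⟩ : ∃ t', t' = r - Q * k := ⟨_, rfl⟩
  have hrt : t + Q * k = r := by omega
  have hHx2 : H * x = 2 * (Q * x) := by rw [← hQ2]; ring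
  have hQ2x : Q * (2 * x - 2) + 2 * Q = 2 * (Q * x) := by
    calc Q * (2 * x - 2) + 2 * Q = Q * ((2 * x - 2) + 2) := by ring
      _ = Q * (2 * x) := by rw [(by omega : (2 * x - 2) + 2 = 2 * x)]
      _ = 2 * (Q * x) := by ring
  have hQkk : Q * ((2 * x - 2) - k) + Q * k = Q * (2 * x - 2) := by
    have h1 := Nat.mul_sub Q (2 * x - 2) k
    have h2 : Q * k ≤ Q * (2 * x - 2) := Nat.mul_le_mul_left Q hk2x
    omega
  have htH : t ≤ H - 1 := by
    rcases min_cases (r / Q) (2 * x - 2) with ⟨he, _⟩ | ⟨he, _⟩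
    · have hmod := Nat.mod_add_div r Q
      have hmlt : r % Q < Q := Nat.mod_lt r (by omega)
      have : t = r % Q := by rw [htdef, hkdef, he]; omega
      omega
    · have hk' : k = 2 * x - 2 := by rw [hkdef, he]
      have ht2 : t = r - Q * (2 * x - 2) := by rw [htdef, hk']
      omega
  have hsum : (H - 1) + Q * (2 * x - 2) = H * x - 1 := by omega
  have hs_eq : s = (H - 1 - t) + Q * ((2 * x - 2) - k) := by omega
  -- hypothesis solution for the within-column part
  obtain ⟨S, hSm, hSn, hSu⟩ := h t (H - 1 - t) (by omega)
  have hHSval : t + (H - 1 - t) = H - 1 := by omega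
  set SS : ℕ → Equiv.Perm (Fin H) := fun j => if hj : j < (t + (H - 1 - t)) then S ⟨j, hj⟩ else 1 with hSSdef
  have hSSm : ∀ j, j < t → ∀ y, Function.minimalPeriod (⇑(SS j)) y = m := by
    intro j hj y
    have hj' : j < (t + (H - 1 - t)) := by omega
    show Function.minimalPeriod (⇑(if hj : j < (t + (H - 1 - t)) then S ⟨j, hj⟩ else 1)) y = m
    rw [dif_pos hj']
    exact hSm ⟨j, hj'⟩ hj y
  have hSSn : ∀ j, t ≤ j → j < H - 1 → ∀ y, Function.minimalPeriod (⇑(SS j)) y = n := by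
    intro j hjt hj y
    have hj' : j < (t + (H - 1 - t)) := by omega
    show Function.minimalPeriod (⇑(if hj : j < (t + (H - 1 - t)) then S ⟨j, hj⟩ else 1)) y = n
    rw [dif_pos hj']
    exact hSn ⟨j, hj'⟩ hjt y
  have hSSapp : ∀ j (hj : j < (t + (H - 1 - t))) (y : Fin H), SS j y = S ⟨j, hj⟩ y := by
    intro j hj y
    show (if hj : j < (t + (H - 1 - t)) then S ⟨j, hj⟩ else 1) y = _
    rw [dif_pos hj]
  have hSSne : ∀ j j', j < H - 1 → j' < H - 1 → j ≠ j' → ∀ y, SS j y ≠ SS j' y := by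
    intro j j' hj hj' hne y hc
    have hjHS : j < (t + (H - 1 - t)) := by omega
    have hj'HS : j' < (t + (H - 1 - t)) := by omega
    have hfix : SS j y ≠ y := by
      intro hfx
      have hper := minPeriod_fixed (⇑(SS j)) y hfx
      rcases Nat.lt_or_ge j t with hlt | hge
      · rw [hSSm j hlt y] at hper; omega
      · rw [hSSn j hge hj y] at hper; omega
    obtain ⟨iu, hiu, huniq⟩ := hSu y (SS j y) (Ne.symm hfix)
    have e1 : (⟨j, hjHS⟩ : Fin (t + (H - 1 - t))) = iu := huniq ⟨j, hjHS⟩ ((hSSapp j hjHS y).symm)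
    have e2 : (⟨j', hj'HS⟩ : Fin (t + (H - 1 - t))) = iu :=
      huniq ⟨j', hj'HS⟩ (((hSSapp j' hj'HS y).symm).trans hc.symm)
    rw [← e2] at e1
    exact hne (congrArg Fin.val e1)
  -- lifting the within permutations
  set rowE : Fin H ≃ ZMod 2 × ZMod Q :=
    ((finCongr hQ2.symm).trans finProdFinEquiv.symm).trans
      (Equiv.prodCongr (finEquivZMod 2) (finEquivZMod Q)) with hrowE
  set lift : ℕ → Equiv.Perm ((ZMod 2 × ZMod Q) × ZMod x) :=
    fun j => Equiv.prodCongr ((rowE.symm.trans (SS j)).trans rowE) (Equiv.refl (ZMod x))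
    with hliftdef
  have hliftP : ∀ j w, Function.minimalPeriod (⇑(lift j)) w
      = Function.minimalPeriod (⇑(SS j)) (rowE.symm w.1) := by
    intro j w
    obtain ⟨u, col⟩ := w
    show Function.minimalPeriod
      (⇑(Equiv.prodCongr ((rowE.symm.trans (SS j)).trans rowE) (Equiv.refl (ZMod x)))) (u, col) = _
    rw [minPeriod_prodCongr, minPeriod_conj2]
  have hliftcol : ∀ j w, ((lift j) w).2 = w.2 := fun j w => rfl
  have hliftne : ∀ j j', j < H - 1 → j' < H - 1 → j ≠ j' → ∀ w, lift j w ≠ lift j' w := by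
    intro j j' hj hj' hne w hc
    have h1 : ((rowE.symm.trans (SS j)).trans rowE) w.1
        = ((rowE.symm.trans (SS j')).trans rowE) w.1 := congrArg Prod.fst hc
    rw [conj2_apply, conj2_apply] at h1
    exact hSSne j j' hj hj' hne _ (rowE.injective h1)
  -- the block permutations
  choose B hB using fun d => blockPerm_exists Q x d
  -- index bookkeeping
  set uF : ℕ → ℕ := fun i => if i < r then (i - t) / Q else (i - (r + (H - 1 - t))) / Q + k
    with huFdef
  set cF : ℕ → ℕ := fun i => if i < r then (i - t) % Q else (i - (r + (H - 1 - t))) % Q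
    with hcFdef
  set βF : ℕ → ZMod Q := fun i =>
    if i < r then ((H / m : ℕ) : ZMod Q) else ((H / n : ℕ) : ZMod Q) with hβFdef
  set F : ℕ → Equiv.Perm ((ZMod 2 × ZMod Q) × ZMod x) := fun i =>
    if i < t then lift i
    else if r ≤ i ∧ i < r + (H - 1 - t) then lift (t + (i - r))
    else B (uF i / 4 + 1) (uF i % 4) (cF i) (βF i) with hFdef
  have hFwithin1 : ∀ i, i < t → F i = lift i := by
    intro i hi
    show (if i < t then lift i else _) = lift i
    rw [if_pos hi]
  have hFwithin2 : ∀ i, r ≤ i → i < r + (H - 1 - t) → F i = lift (t + (i - r)) := by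
    intro i hi1 hi2
    show (if i < t then lift i else if r ≤ i ∧ i < r + (H - 1 - t) then _ else _) = _
    rw [if_neg (by omega), if_pos ⟨hi1, hi2⟩]
  have hFgadget : ∀ i, ¬(i < t) → ¬(r ≤ i ∧ i < r + (H - 1 - t)) →
      F i = B (uF i / 4 + 1) (uF i % 4) (cF i) (βF i) := by
    intro i h1 h2
    show (if i < t then lift i else if r ≤ i ∧ i < r + (H - 1 - t) then _ else _) = _
    rw [if_neg h1, if_neg h2]
  -- gadget index facts
  have hgadget : ∀ i, i < r + s → ¬(i < t) → ¬(r ≤ i ∧ i < r + (H - 1 - t)) →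
      (uF i < 2 * x - 2 ∧ (i < r ↔ uF i < k) ∧ cF i < Q ∧
        1 ≤ uF i / 4 + 1 ∧ 2 * (uF i / 4 + 1) ≤ x) := by
    intro i hi h1 h2
    have hQpos : 0 < Q := by omega
    have humain : uF i < 2 * x - 2 ∧ (i < r ↔ uF i < k) := by
      by_cases hir : i < r
      · have hoff : i - t < Q * k := by omega
        have huv : uF i = (i - t) / Q := by
          show (if i < r then (i - t) / Q else _) = _
          rw [if_pos hir]
        have hlt : (i - t) / Q < k := Nat.div_lt_of_lt_mul hoff
        obtain ⟨D, hD⟩ : ∃ D, (i - t) / Q = D := ⟨_, rfl⟩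
        rw [hD] at hlt huv
        exact ⟨by rw [huv]; omega, by rw [huv]; omega⟩
      · have hge : r + (H - 1 - t) ≤ i := by omega
        have hoff : i - (r + (H - 1 - t)) < Q * ((2 * x - 2) - k) := by omega
        have huv : uF i = (i - (r + (H - 1 - t))) / Q + k := by
          show (if i < r then _ else (i - (r + (H - 1 - t))) / Q + k) = _
          rw [if_neg hir]
        have hlt : (i - (r + (H - 1 - t))) / Q < (2 * x - 2) - k :=
          Nat.div_lt_of_lt_mul hoff
        obtain ⟨D, hD⟩ : ∃ D, (i - (r + (H - 1 - t))) / Q = D := ⟨_, rfl⟩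
        rw [hD] at hlt huv
        exact ⟨by rw [huv]; omega, by rw [huv]; omega⟩
    have hcQ : cF i < Q := by
      by_cases hir : i < r
      · have : cF i = (i - t) % Q := by
          show (if i < r then (i - t) % Q else _) = _
          rw [if_pos hir]
        rw [this]; exact Nat.mod_lt _ (by omega)
      · have : cF i = (i - (r + (H - 1 - t))) % Q := by
          show (if i < r then _ else (i - (r + (H - 1 - t))) % Q) = _
          rw [if_neg hir]
        rw [this]; exact Nat.mod_lt _ (by omega)
    exact ⟨humain.1, humain.2, hcQ, by omega, by omega⟩
  -- matching-block class bound
  have hmatcls : ∀ dd : ℕ, 1 ≤ dd → 2 * dd ≤ x → x / x.gcd dd = 2 →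
      ∀ u, u < 2 * x - 2 → u / 4 + 1 = dd → u % 4 < 2 := by
    intro dd h1 h2 hL2 u hu hud
    have hg := Nat.gcd_dvd_right x dd
    have hgx := Nat.gcd_dvd_left x dd
    have hgpos : 0 < x.gcd dd := Nat.gcd_pos_of_pos_left dd (by omega)
    have hgL : x.gcd dd * (x / x.gcd dd) = x := Nat.mul_div_cancel' hgx
    rw [hL2] at hgL
    have hgled : x.gcd dd ≤ dd := Nat.le_of_dvd (by omega) hg
    omega
  -- minimal periods
  have hKEY1m : ∀ i, i < r → ∀ w, Function.minimalPeriod (⇑(F i)) w = m := by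
    intro i hir w
    by_cases h1 : i < t
    · rw [hFwithin1 i h1, hliftP]
      exact hSSm i h1 _
    · have h2 : ¬(r ≤ i ∧ i < r + (H - 1 - t)) := by omega
      rw [hFgadget i h1 h2]
      obtain ⟨hu1, hu2, hu3, hd1, hd2⟩ := hgadget i (by omega) h1 h2
      obtain ⟨P1, P2, P3⟩ := hB (uF i / 4 + 1) hd1 hd2
      rw [P1]
      have : βF i = ((H / m : ℕ) : ZMod Q) := by
        show (if i < r then _ else _) = _
        rw [if_pos hir]
      rw [this, hordm]
      omega
  have hKEY1n : ∀ i, r ≤ i → i < r + s → ∀ w, Function.minimalPeriod (⇑(F i)) w = n := by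
    intro i hir hirs w
    by_cases h2 : r ≤ i ∧ i < r + (H - 1 - t)
    · rw [hFwithin2 i h2.1 h2.2, hliftP]
      exact hSSn (t + (i - r)) (by omega) (by omega) _
    · have h1 : ¬ (i < t) := by omega
      rw [hFgadget i h1 h2]
      obtain ⟨hu1, hu2, hu3, hd1, hd2⟩ := hgadget i hirs h1 h2
      obtain ⟨P1, P2, P3⟩ := hB (uF i / 4 + 1) hd1 hd2
      rw [P1]
      have : βF i = ((H / n : ℕ) : ZMod Q) := by
        show (if i < r then _ else _) = _
        rw [if_neg (by omega)]
      rw [this, hordn]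
      omega
  -- pairwise disagreement
  have hKEY2 : ∀ i j, i < j → j < r + s → ∀ w, F i w ≠ F j w := by
    intro i j hij hj w
    have hi : i < r + s := by omega
    have hreg : ∀ a, (a < t) ∨ (r ≤ a ∧ a < r + (H - 1 - t)) ∨
        (¬(a < t) ∧ ¬(r ≤ a ∧ a < r + (H - 1 - t))) := by intro a; omega
    -- helper: within data
    have hwlift : ∀ a, a < r + s → (a < t ∨ (r ≤ a ∧ a < r + (H - 1 - t))) →
        ∃ ja, ja < H - 1 ∧ F a = lift ja ∧
          ((a < t ∧ ja = a) ∨ (r ≤ a ∧ ja = t + (a - r))) := by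
      intro a ha hcase
      rcases hcase with hc | hc
      · exact ⟨a, by omega, hFwithin1 a hc, Or.inl ⟨hc, rfl⟩⟩
      · exact ⟨t + (a - r), by omega, hFwithin2 a hc.1 hc.2, Or.inr ⟨hc.1, rfl⟩⟩
    rcases hreg i with hiA | hiB | ⟨hiC1, hiC2⟩ <;> rcases hreg j with hjA | hjB | ⟨hjC1, hjC2⟩
    -- both within cases
    case _ =>
      obtain ⟨ji, hji, hFi, hdi⟩ := hwlift i hi (Or.inl hiA)
      obtain ⟨jj, hjj, hFj, hdj⟩ := hwlift j hj (Or.inl hjA)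
      rw [hFi, hFj]; exact hliftne ji jj hji hjj (by omega) w
    case _ =>
      obtain ⟨ji, hji, hFi, hdi⟩ := hwlift i hi (Or.inl hiA)
      obtain ⟨jj, hjj, hFj, hdj⟩ := hwlift j hj (Or.inr hjB)
      rw [hFi, hFj]
      refine hliftne ji jj hji hjj ?_ w
      omega
    case _ =>
      -- i within region A, j gadget
      obtain ⟨ji, hji, hFi, hdi⟩ := hwlift i hi (Or.inl hiA)
      obtain ⟨hu1, hu2, hu3, hd1, hd2⟩ := hgadget j hj hjC1 hjC2
      obtain ⟨P1, P2, P3⟩ := hB (uF j / 4 + 1) hd1 hd2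
      rw [hFi, hFgadget j hjC1 hjC2]
      intro hc
      have hcol := congrArg Prod.snd hc
      rw [hliftcol] at hcol
      exact within_col_ne x hd1 hd2 w.2 _ (P2 (uF j % 4) (cF j) (βF j) w) hcol
    case _ =>
      obtain ⟨ji, hji, hFi, hdi⟩ := hwlift i hi (Or.inr hiB)
      obtain ⟨jj, hjj, hFj, hdj⟩ := hwlift j hj (Or.inl hjA)
      rw [hFi, hFj]
      refine hliftne ji jj hji hjj ?_ w
      omega
    case _ =>
      obtain ⟨ji, hji, hFi, hdi⟩ := hwlift i hi (Or.inr hiB)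
      obtain ⟨jj, hjj, hFj, hdj⟩ := hwlift j hj (Or.inr hjB)
      rw [hFi, hFj]
      refine hliftne ji jj hji hjj ?_ w
      omega
    case _ =>
      obtain ⟨ji, hji, hFi, hdi⟩ := hwlift i hi (Or.inr hiB)
      obtain ⟨hu1, hu2, hu3, hd1, hd2⟩ := hgadget j hj hjC1 hjC2
      obtain ⟨P1, P2, P3⟩ := hB (uF j / 4 + 1) hd1 hd2
      rw [hFi, hFgadget j hjC1 hjC2]
      intro hc
      have hcol := congrArg Prod.snd hc
      rw [hliftcol] at hcol
      exact within_col_ne x hd1 hd2 w.2 _ (P2 (uF j % 4) (cF j) (βF j) w) hcol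
    case _ =>
      obtain ⟨jj, hjj, hFj, hdj⟩ := hwlift j hj (Or.inl hjA)
      obtain ⟨hu1, hu2, hu3, hd1, hd2⟩ := hgadget i hi hiC1 hiC2
      obtain ⟨P1, P2, P3⟩ := hB (uF i / 4 + 1) hd1 hd2
      rw [hFj, hFgadget i hiC1 hiC2]
      intro hc
      have hcol := congrArg Prod.snd hc
      rw [hliftcol] at hcol
      exact within_col_ne x hd1 hd2 w.2 _ (P2 (uF i % 4) (cF i) (βF i) w) hcol.symm
    case _ =>
      obtain ⟨jj, hjj, hFj, hdj⟩ := hwlift j hj (Or.inr hjB)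
      obtain ⟨hu1, hu2, hu3, hd1, hd2⟩ := hgadget i hi hiC1 hiC2
      obtain ⟨P1, P2, P3⟩ := hB (uF i / 4 + 1) hd1 hd2
      rw [hFj, hFgadget i hiC1 hiC2]
      intro hc
      have hcol := congrArg Prod.snd hc
      rw [hliftcol] at hcol
      exact within_col_ne x hd1 hd2 w.2 _ (P2 (uF i % 4) (cF i) (βF i) w) hcol.symm
    case _ =>
      -- both gadget
      obtain ⟨hu1, hu2, hu3, hd1, hd2⟩ := hgadget i hi hiC1 hiC2
      obtain ⟨hu1', hu2', hu3', hd1', hd2'⟩ := hgadget j hj hjC1 hjC2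
      rw [hFgadget i hiC1 hiC2, hFgadget j hjC1 hjC2]
      by_cases hdd : uF i / 4 + 1 = uF j / 4 + 1
      · -- same block
        rw [hdd]
        obtain ⟨P1, P2, P3⟩ := hB (uF j / 4 + 1) hd1' hd2'
        refine P3 (uF i % 4) (uF j % 4) (cF i) (cF j) (βF i) (βF j) w
          (by omega) (by omega) hu3 hu3'
          (fun hmat => ⟨hmatcls _ hd1' hd2' hmat (uF i) hu1 hdd,
            hmatcls _ hd1' hd2' hmat (uF j) hu1' rfl⟩) ?_
        by_cases huu : uF i = uF j
        · -- same unit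
          right
          have hir : i < r ↔ j < r := by rw [hu2, hu2', huu]
          constructor
          · show (if i < r then _ else _) = (if j < r then _ else _)
            by_cases hir' : i < r
            · rw [if_pos hir', if_pos (hir.mp hir')]
            · rw [if_neg hir', if_neg (fun hc => hir' (hir.mpr hc))]
          · -- different c
            by_cases hir' : i < r
            · have hjr : j < r := hir.mp hir'
              have hci : cF i = (i - t) % Q := by
                show (if i < r then _ else _) = _; rw [if_pos hir']
              have hcj : cF j = (j - t) % Q := by
                show (if j < r then _ else _) = _; rw [if_pos hjr]
              have hui : uF i = (i - t) / Q := by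
                show (if i < r then _ else _) = _; rw [if_pos hir']
              have huj : uF j = (j - t) / Q := by
                show (if j < r then _ else _) = _; rw [if_pos hjr]
              intro hc
              rw [hci, hcj] at hc
              rw [hui, huj] at huu
              have huu' : (i - t) / Q = (j - t) / Q := by omega
              have he2 : i - t = j - t := by
                calc i - t = Q * ((i - t) / Q) + (i - t) % Q := (Nat.div_add_mod _ _).symm
                  _ = Q * ((j - t) / Q) + (j - t) % Q := by rw [huu', hc]
                  _ = j - t := Nat.div_add_mod _ _
              omega
            · have hjr : ¬ j < r := fun hc => hir' (hir.mpr hc)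
              have hci : cF i = (i - (r + (H - 1 - t))) % Q := by
                show (if i < r then _ else _) = _; rw [if_neg hir']
              have hcj : cF j = (j - (r + (H - 1 - t))) % Q := by
                show (if j < r then _ else _) = _; rw [if_neg hjr]
              have hui : uF i = (i - (r + (H - 1 - t))) / Q + k := by
                show (if i < r then _ else _) = _; rw [if_neg hir']
              have huj : uF j = (j - (r + (H - 1 - t))) / Q + k := by
                show (if j < r then _ else _) = _; rw [if_neg hjr]
              have hit : ¬ i < t := hiC1
              have hjt : ¬ j < t := hjC1
              intro hc
              rw [hci, hcj] at hc
              rw [hui, huj] at huu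
              have huu' : (i - (r + (H - 1 - t))) / Q = (j - (r + (H - 1 - t))) / Q := by omega
              have he2 : i - (r + (H - 1 - t)) = j - (r + (H - 1 - t)) := by
                calc i - (r + (H - 1 - t))
                    = Q * ((i - (r + (H - 1 - t))) / Q) + (i - (r + (H - 1 - t))) % Q :=
                      (Nat.div_add_mod _ _).symm
                  _ = Q * ((j - (r + (H - 1 - t))) / Q) + (j - (r + (H - 1 - t))) % Q := by
                      rw [huu', hc]
                  _ = j - (r + (H - 1 - t)) := Nat.div_add_mod _ _
              omega
        · exact Or.inl (by omega)
      · -- different blocks : columns differ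
        obtain ⟨P1, P2, P3⟩ := hB (uF i / 4 + 1) hd1 hd2
        obtain ⟨P1', P2', P3'⟩ := hB (uF j / 4 + 1) hd1' hd2'
        intro hc
        have hcol := congrArg Prod.snd hc
        exact cross_col_ne x hd1 hd2 hd1' hd2' hdd w.2 _ _
          (P2 (uF i % 4) (cF i) (βF i) w) (P2' (uF j % 4) (cF j) (βF j) w) hcol
  -- assemble
  have hv' : H * x = r + s + 1 := by
    have : 0 < H * x := Nat.mul_pos hHpos hxpos
    omega
  exact build_solution
    (finProdFinEquiv.symm.trans (Equiv.prodCongr rowE (finEquivZMod x)))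
    m n r s hm hn hv' F hKEY1m hKEY1n hKEY2
end

section
/- (Lemma 3.3.) Let m ≥ 2 be an even integer. Then: (a) there exist permutations σ_1, σ_2 of ZMod 2 × ZMod m, each fixed-point-free with all cycles of length m, such that (σ_k(i, a)).2 = a + 1 for all (i, a) and k ∈ {1, 2}, and for every i, j ∈ ZMod 2 and a ∈ ZMod m there is exactly one k ∈ {1, 2} with σ_k(i, a) = (j, a + 1); and (b) there exist permutations σ_1, σ_2 of ZMod 2 × ZMod m, each fixed-point-free with all cycles of length 2m, satisfying the same two conditions. (That is, the digraph C_m ≀ K̄_2 has both a directed C_m-factorization and a directed C_{2m}-factorization into two factors.) -/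
/-- The shift permutation `(i, a) ↦ (i + c, a + 1)`. -/
def permA (m : ℕ) (c : ZMod 2) : Equiv.Perm (ZMod 2 × ZMod m) :=
  Equiv.prodCongr (Equiv.addRight c) (Equiv.addRight (1 : ZMod m))

lemma twist_involutive (m : ℕ) :
    Function.Involutive (fun p : ZMod 2 × ZMod m =>
      (p.1 + (if p.2 = 0 then 1 else 0), p.2)) := by
  intro p
  obtain ⟨i, a⟩ := p
  have h11 : (1 : ZMod 2) + 1 = 0 := by decide
  by_cases h : a = 0 <;> simp [h, add_assoc, h11]

/-- The twisted shift permutation `(i, a) ↦ (i + (δ_{a,0}) + c, a + 1)`. -/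
def permB (m : ℕ) (c : ZMod 2) : Equiv.Perm (ZMod 2 × ZMod m) :=
  ((twist_involutive m).toPerm _).trans (permA m c)

lemma permA_apply (m : ℕ) (c : ZMod 2) (i : ZMod 2) (a : ZMod m) :
    permA m c (i, a) = (i + c, a + 1) := rfl

lemma permB_apply (m : ℕ) (c : ZMod 2) (i : ZMod 2) (a : ZMod m) :
    permB m c (i, a) = (i + (if a = 0 then 1 else 0) + c, a + 1) := rfl

lemma iterA (m : ℕ) (c : ZMod 2) (n : ℕ) (i : ZMod 2) (a : ZMod m) :
    (⇑(permA m c))^[n] (i, a) = (i + (n : ZMod 2) * c, a + (n : ZMod m)) := by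
  induction n with
  | zero => simp
  | succ n ih =>
    rw [Function.iterate_succ_apply', ih, permA_apply]
    push_cast
    ring_nf

lemma iterB (m : ℕ) (c : ZMod 2) (n : ℕ) (i : ZMod 2) (a : ZMod m) :
    (⇑(permB m c))^[n] (i, a) =
      (i + (n : ZMod 2) * c +
        ((((Finset.range n).filter fun t : ℕ => a + (t : ZMod m) = 0).card : ℕ) : ZMod 2),
        a + (n : ZMod m)) := by
  induction n with
  | zero => simp
  | succ n ih =>
    rw [Function.iterate_succ_apply', ih, permB_apply]
    have hrange : (Finset.range (n + 1)).filter (fun t : ℕ => a + (t : ZMod m) = 0) =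
        if a + (n : ZMod m) = 0 then
          insert n ((Finset.range n).filter fun t : ℕ => a + (t : ZMod m) = 0)
        else (Finset.range n).filter fun t : ℕ => a + (t : ZMod m) = 0 := by
      rw [Finset.range_add_one, Finset.filter_insert]
    by_cases h : a + (n : ZMod m) = 0
    · have hn : n ∉ (Finset.range n).filter fun t : ℕ => a + (t : ZMod m) = 0 := by
        simp
      rw [hrange]
      simp only [if_pos h]
      rw [Finset.card_insert_of_notMem hn, Prod.mk.injEq]
      constructor <;> push_cast <;> ring
    · rw [hrange]
      simp only [if_neg h]
      rw [Prod.mk.injEq]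
      constructor <;> push_cast <;> ring

lemma card_filter_eq_one (m : ℕ) [NeZero m] (a : ZMod m) :
    ((Finset.range m).filter fun t : ℕ => a + (t : ZMod m) = 0).card = 1 := by
  rw [Finset.card_eq_one]
  refine ⟨(-a).val, ?_⟩
  ext t
  simp only [Finset.mem_filter, Finset.mem_range, Finset.mem_singleton]
  constructor
  · rintro ⟨ht, heq⟩
    have h1 : (t : ZMod m) = -a := by linear_combination heq
    have h2 := ZMod.val_cast_of_lt ht
    rw [h1] at h2
    omega
  · rintro rfl
    refine ⟨ZMod.val_lt _, ?_⟩
    rw [ZMod.natCast_val, ZMod.cast_id]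
    ring

lemma iterB_m (m : ℕ) [NeZero m] (hme : Even m) (c : ZMod 2) (i : ZMod 2) (a : ZMod m) :
    (⇑(permB m c))^[m] (i, a) = (i + 1, a) := by
  have h2 : (m : ZMod 2) = 0 := (ZMod.natCast_eq_zero_iff m 2).mpr hme.two_dvd
  rw [iterB, card_filter_eq_one, h2, ZMod.natCast_self]
  simp

lemma iterB_mq (m : ℕ) [NeZero m] (hme : Even m) (c : ZMod 2) (q : ℕ)
    (i : ZMod 2) (a : ZMod m) :
    (⇑(permB m c))^[m * q] (i, a) = (i + (q : ZMod 2), a) := by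
  induction q generalizing i with
  | zero => simp
  | succ q ih =>
    rw [Nat.mul_succ, Function.iterate_add_apply, iterB_m m hme, ih]
    push_cast
    ring_nf

lemma nat_dvd_of_zmod (m n : ℕ) [NeZero m] (h : (n : ZMod m) = 0) : m ∣ n :=
  (ZMod.natCast_eq_zero_iff n m).mp h

/-- Lemma 3.3: for even `m ≥ 2`, the digraph `C_m ≀ K̄_2` (vertices
`ZMod 2 × ZMod m`, arcs `((i, a), (j, a + 1))`) has both a directed
`C_m`-factorization and a directed `C_(2m)`-factorization into two factors.
Each factor is a permutation moving along arcs, fixed-point-free with all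
cycles of the prescribed length (every point has that minimal period), and
every arc lies in exactly one of the two factors. -/
theorem cycle_wreath_factorization (m : ℕ) (hm : 2 ≤ m) (hme : Even m) :
    (∃ σ : Fin 2 → Equiv.Perm (ZMod 2 × ZMod m),
      (∀ k p, Function.minimalPeriod ⇑(σ k) p = m) ∧
      (∀ k p, (σ k p).2 = p.2 + 1) ∧
      (∀ (i j : ZMod 2) (a : ZMod m), ∃! k, σ k (i, a) = (j, a + 1))) ∧
    (∃ σ : Fin 2 → Equiv.Perm (ZMod 2 × ZMod m),
      (∀ k p, Function.minimalPeriod ⇑(σ k) p = 2 * m) ∧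
      (∀ k p, (σ k p).2 = p.2 + 1) ∧
      (∀ (i j : ZMod 2) (a : ZMod m), ∃! k, σ k (i, a) = (j, a + 1))) := by
  haveI : NeZero m := ⟨by omega⟩
  have h2m : (m : ZMod 2) = 0 :=
    (ZMod.natCast_eq_zero_iff m 2).mpr hme.two_dvd
  have hcases : ∀ x : ZMod 2, ∃! k : Fin 2, (if k = 0 then (0 : ZMod 2) else 1) = x := by
    unfold ExistsUnique
    decide
  constructor
  · refine ⟨fun k => permA m (if k = 0 then 0 else 1), ?_, ?_, ?_⟩
    · intro k p
      obtain ⟨i, a⟩ := p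
      set c : ZMod 2 := if k = 0 then 0 else 1 with hc
      have hper : Function.IsPeriodicPt (⇑(permA m c)) m (i, a) := by
        show (⇑(permA m c))^[m] (i, a) = (i, a)
        rw [iterA, h2m, ZMod.natCast_self]
        simp
      have hdvd : ∀ n, Function.IsPeriodicPt (⇑(permA m c)) n (i, a) → m ∣ n := by
        intro n hn
        have heq : (i + (n : ZMod 2) * c, a + (n : ZMod m)) = (i, a) := by
          rw [← iterA]; exact hn
        have h2 : a + (n : ZMod m) = a := congrArg Prod.snd heq
        exact nat_dvd_of_zmod m n (by linear_combination h2)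
      exact Nat.dvd_antisymm (hper.minimalPeriod_dvd)
        (hdvd _ (Function.isPeriodicPt_minimalPeriod _ _))
    · intro k p; rfl
    · intro i j a
      obtain ⟨k, hk, hk'⟩ := hcases (j - i)
      refine ⟨k, ?_, ?_⟩
      · show permA m (if k = 0 then 0 else 1) (i, a) = (j, a + 1)
        rw [permA_apply, hk, Prod.mk.injEq]
        exact ⟨by ring, rfl⟩
      · intro y hy
        have hy' : permA m (if y = 0 then 0 else 1) (i, a) = (j, a + 1) := hy
        rw [permA_apply, Prod.mk.injEq] at hy'
        apply hk'
        linear_combination hy'.1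
  · refine ⟨fun k => permB m (if k = 0 then 0 else 1), ?_, ?_, ?_⟩
    · intro k p
      obtain ⟨i, a⟩ := p
      set c : ZMod 2 := if k = 0 then 0 else 1 with hc
      have h22 : ((2 : ℕ) : ZMod 2) = 0 := by decide
      have hper : Function.IsPeriodicPt (⇑(permB m c)) (2 * m) (i, a) := by
        show (⇑(permB m c))^[2 * m] (i, a) = (i, a)
        rw [mul_comm, iterB_mq m hme, h22, add_zero]
      have hdvd : ∀ n, Function.IsPeriodicPt (⇑(permB m c)) n (i, a) → 2 * m ∣ n := by
        intro n hn
        have heq : (i + (n : ZMod 2) * c +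
            ((((Finset.range n).filter fun t : ℕ => a + (t : ZMod m) = 0).card : ℕ) : ZMod 2),
            a + (n : ZMod m)) = (i, a) := by
          rw [← iterB]; exact hn
        have h2 : a + (n : ZMod m) = a := congrArg Prod.snd heq
        have hmn : m ∣ n := nat_dvd_of_zmod m n (by linear_combination h2)
        obtain ⟨q, rfl⟩ := hmn
        have hq : (i + (q : ZMod 2), a) = (i, a) := by
          rw [← iterB_mq m hme c]; exact hn
        have hq1 : i + (q : ZMod 2) = i := congrArg Prod.fst hq
        have h2q : 2 ∣ q := nat_dvd_of_zmod 2 q (by linear_combination hq1)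
        obtain ⟨r, rfl⟩ := h2q
        exact ⟨r, by ring⟩
      exact Nat.dvd_antisymm (hper.minimalPeriod_dvd)
        (hdvd _ (Function.isPeriodicPt_minimalPeriod _ _))
    · intro k p; rfl
    · intro i j a
      obtain ⟨k, hk, hk'⟩ := hcases (j - i - (if a = 0 then 1 else 0))
      refine ⟨k, ?_, ?_⟩
      · show permB m (if k = 0 then 0 else 1) (i, a) = (j, a + 1)
        rw [permB_apply, hk, Prod.mk.injEq]
        exact ⟨by ring, rfl⟩
      · intro y hy
        have hy' : permB m (if y = 0 then 0 else 1) (i, a) = (j, a + 1) := hy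
        rw [permB_apply, Prod.mk.injEq] at hy'
        apply hk'
        linear_combination hy'.1
end

section
/- (Lemma 3.4.) Let m ≥ 2 be an integer. Then there exist permutations σ_1, σ_2, σ_3 of ZMod 2 × ZMod m such that: σ_1 is fixed-point-free with all cycles of length m; σ_2 and σ_3 are fixed-point-free with all cycles of length 2m; for each k ∈ {1, 2, 3} and every vertex (i, a), either (σ_k(i, a)).2 = a + 1, or (σ_k(i, a)).2 = a and (σ_k(i, a)).1 ≠ i; and for every arc (p, q) of Γ_m there is exactly one k ∈ {1, 2, 3} with σ_k(p) = q. (That is, Γ_m has a factorization into one directed C_m-factor and two directed C_{2m}-factors.) -/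
namespace GammaAux

variable {m : ℕ}

private lemma z2 (i : ZMod 2) : i = 0 ∨ i = 1 := by revert i; decide

/-- shift map -/
def sh (m : ℕ) : ZMod 2 × ZMod m → ZMod 2 × ZMod m := fun p => (p.1, p.2 + 1)

lemma sh_iter (n : ℕ) (p : ZMod 2 × ZMod m) : (sh m)^[n] p = (p.1, p.2 + n) := by
  induction n with
  | zero => simp [sh]
  | succ n ih =>
      rw [Function.iterate_succ_apply', ih]
      simp [sh]
      push_cast
      ring

def f1 (m : ℕ) : ZMod 2 × ZMod m → ZMod 2 × ZMod m :=
  fun p => if p.1 = 0 then (1, p.2 + 1) else (0, p.2)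

def g1 (m : ℕ) : ZMod 2 × ZMod m → ZMod 2 × ZMod m :=
  fun p => if p.1 = 0 then (1, p.2) else (0, p.2 - 1)

def f2 (m : ℕ) : ZMod 2 × ZMod m → ZMod 2 × ZMod m :=
  fun p => if p.1 = 0 then (1, p.2) else (0, p.2 + 1)

def g2 (m : ℕ) : ZMod 2 × ZMod m → ZMod 2 × ZMod m :=
  fun p => if p.1 = 0 then (1, p.2 - 1) else (0, p.2)

def e1 (m : ℕ) : Equiv.Perm (ZMod 2 × ZMod m) :=
  ⟨f1 m, g1 m, by
    intro p
    rcases z2 p.1 with h | h <;> simp [f1, g1, h, Prod.ext_iff] <;> decide, by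
    intro p
    rcases z2 p.1 with h | h <;> simp [f1, g1, h, Prod.ext_iff] <;> decide⟩

def e2 (m : ℕ) : Equiv.Perm (ZMod 2 × ZMod m) :=
  ⟨f2 m, g2 m, by
    intro p
    rcases z2 p.1 with h | h <;> simp [f2, g2, h, Prod.ext_iff] <;> decide, by
    intro p
    rcases z2 p.1 with h | h <;> simp [f2, g2, h, Prod.ext_iff] <;> decide⟩

def e0 (m : ℕ) : Equiv.Perm (ZMod 2 × ZMod m) :=
  (Equiv.refl (ZMod 2)).prodCongr (Equiv.addRight (1 : ZMod m))

lemma e0_coe : ⇑(e0 m) = sh m := by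
  funext p; rfl

lemma f1_sq : (f1 m) ∘ (f1 m) = sh m := by
  funext p
  rcases z2 p.1 with h | h <;> simp [f1, sh, h, Prod.ext_iff] <;> decide

lemma f2_sq : (f2 m) ∘ (f2 m) = sh m := by
  funext p
  rcases z2 p.1 with h | h <;> simp [f2, sh, h, Prod.ext_iff] <;> decide

lemma f1_fst (p : ZMod 2 × ZMod m) : (f1 m p).1 = p.1 + 1 := by
  rcases z2 p.1 with h | h <;> simp [f1, h] <;> decide

lemma f2_fst (p : ZMod 2 × ZMod m) : (f2 m p).1 = p.1 + 1 := by
  rcases z2 p.1 with h | h <;> simp [f2, h] <;> decide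

lemma minper_sh (hm : 2 ≤ m) (p : ZMod 2 × ZMod m) :
    Function.minimalPeriod (sh m) p = m := by
  haveI : NeZero m := ⟨by omega⟩
  have hper : Function.IsPeriodicPt (sh m) m p := by
    show (sh m)^[m] p = p
    rw [sh_iter]
    simp [ZMod.natCast_self]
  have hdvd := Function.IsPeriodicPt.minimalPeriod_dvd hper
  have hpos : 0 < Function.minimalPeriod (sh m) p :=
    Function.IsPeriodicPt.minimalPeriod_pos (by omega) hper
  set d := Function.minimalPeriod (sh m) p with hd
  have hperd : Function.IsPeriodicPt (sh m) d p :=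
    Function.isPeriodicPt_minimalPeriod _ _
  have : (sh m)^[d] p = p := hperd
  rw [sh_iter] at this
  have hzero : (d : ZMod m) = 0 := by
    have := congrArg Prod.snd this
    simpa using this
  have hmd : m ∣ d := (ZMod.natCast_eq_zero_iff d m).mp hzero
  exact Nat.dvd_antisymm hdvd hmd

lemma minper_double (hm : 2 ≤ m) (f : ZMod 2 × ZMod m → ZMod 2 × ZMod m)
    (hsq : f ∘ f = sh m) (hfst : ∀ p, (f p).1 = p.1 + 1)
    (p : ZMod 2 × ZMod m) : Function.minimalPeriod f p = 2 * m := by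
  haveI : NeZero m := ⟨by omega⟩
  have hiter2 : ∀ n q, f^[2 * n] q = (q.1, q.2 + n) := by
    intro n q
    have h2 : f^[2] = sh m := by rw [← hsq]; rfl
    rw [Function.iterate_mul, h2, sh_iter]
  have hper : Function.IsPeriodicPt f (2 * m) p := by
    show f^[2 * m] p = p
    rw [hiter2]
    simp [ZMod.natCast_self]
  have hdvd := Function.IsPeriodicPt.minimalPeriod_dvd hper
  have hpos : 0 < Function.minimalPeriod f p :=
    Function.IsPeriodicPt.minimalPeriod_pos (by omega) hper
  set d := Function.minimalPeriod f p with hd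
  have hperd : f^[d] p = p := Function.isPeriodicPt_minimalPeriod _ _
  have heven : d % 2 = 0 := by
    by_contra hodd
    have h1 : d % 2 = 1 := by omega
    obtain ⟨k, hk⟩ : ∃ k, d = 2 * k + 1 := ⟨d / 2, by omega⟩
    rw [hk, Function.iterate_succ_apply', hiter2] at hperd
    have := congrArg Prod.fst hperd
    rw [hfst] at this
    simp at this
  obtain ⟨j, hj⟩ : ∃ j, d = 2 * j := ⟨d / 2, by omega⟩
  rw [hj, hiter2] at hperd
  have hzero : (j : ZMod m) = 0 := by
    have := congrArg Prod.snd hperd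
    simpa using this
  have hmj : m ∣ j := (ZMod.natCast_eq_zero_iff j m).mp hzero
  have : 2 * m ∣ d := by
    rw [hj]; exact Nat.mul_dvd_mul_left 2 hmj
  exact Nat.dvd_antisymm hdvd this

end GammaAux

open GammaAux

/-- Lemma 3.4: for `m ≥ 2`, the digraph `Γ_m = (C_m ≀ K̄_2) ⊕ m K_2^*`
(vertices `ZMod 2 × ZMod m`, arcs `((i, a), (j, b))` with `b = a + 1`, or
`b = a` and `j ≠ i`) has a factorization into one directed `C_m`-factor and
two directed `C_(2m)`-factors. -/
theorem gamma_factorization (m : ℕ) (hm : 2 ≤ m) :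
    ∃ σ : Fin 3 → Equiv.Perm (ZMod 2 × ZMod m),
      (∀ p, Function.minimalPeriod ⇑(σ 0) p = m) ∧
      (∀ k : Fin 3, k ≠ 0 → ∀ p, Function.minimalPeriod ⇑(σ k) p = 2 * m) ∧
      (∀ k p, (σ k p).2 = p.2 + 1 ∨ ((σ k p).2 = p.2 ∧ (σ k p).1 ≠ p.1)) ∧
      (∀ p q : ZMod 2 × ZMod m, (q.2 = p.2 + 1 ∨ (q.2 = p.2 ∧ q.1 ≠ p.1)) →
        ∃! k, σ k p = q) := by
  haveI : NeZero m := ⟨by omega⟩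
  haveI : Fact (1 < m) := ⟨by omega⟩
  have h1 : (1 : ZMod m) ≠ 0 := one_ne_zero
  have h2 : (1 : ZMod 2) ≠ 0 := by decide
  have h2' : (0 : ZMod 2) ≠ 1 := by decide
  have hne : ∀ a : ZMod m, a + 1 ≠ a := by
    intro a h
    exact h1 (by linear_combination h - a)
  refine ⟨![e0 m, e1 m, e2 m], ?_, ?_, ?_, ?_⟩
  · intro p
    simp only [Matrix.cons_val_zero]
    rw [e0_coe]
    exact minper_sh hm p
  · intro k hk p
    fin_cases k
    · simp at hk
    · exact minper_double hm (f1 m) f1_sq f1_fst p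
    · exact minper_double hm (f2 m) f2_sq f2_fst p
  · intro k p
    fin_cases k
    · left; rfl
    · rcases z2 p.1 with h | h
      · left; simp [e1, f1, h]
      · right
        refine ⟨by simp [e1, f1, h], by simp [e1, f1, h]⟩
    · rcases z2 p.1 with h | h
      · right
        refine ⟨by simp [e2, f2, h], by simp [e2, f2, h]⟩
      · left; simp [e2, f2, h]
  · rintro ⟨i, a⟩ ⟨j, b⟩ hq
    simp only at hq
    have he0 : (e0 m) (i, a) = (i, a + 1) := rfl
    rcases z2 i with hi | hi <;> subst hi
    · have he1 : (e1 m) ((0 : ZMod 2), a) = (1, a + 1) := by simp [e1, f1]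
      have he2 : (e2 m) ((0 : ZMod 2), a) = (1, a) := by simp [e2, f2]
      rcases z2 j with hj | hj <;> subst hj
      · have hb : b = a + 1 := by
          rcases hq with h | ⟨h, hne'⟩
          · exact h
          · exact absurd rfl hne'
        subst hb
        refine ⟨0, by simp [he0], ?_⟩
        intro k hk
        fin_cases k
        · rfl
        · exfalso
          have hk' := he1.symm.trans hk
          simp [Prod.ext_iff, h1, h2, h2', hne] at hk'
        · exfalso
          have hk' := he2.symm.trans hk
          simp [Prod.ext_iff, h1, h2, h2', hne] at hk'
      · rcases hq with hb | ⟨hb, -⟩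
        · subst hb
          refine ⟨1, by simp [he1], ?_⟩
          intro k hk
          fin_cases k
          · exfalso
            have hk' := he0.symm.trans hk
            simp [Prod.ext_iff, h1, h2, h2', hne] at hk'
          · rfl
          · exfalso
            have hk' := he2.symm.trans hk
            simp [Prod.ext_iff, h1, h2, h2', hne] at hk'
        · subst hb
          refine ⟨2, by simp [he2], ?_⟩
          intro k hk
          fin_cases k
          · exfalso
            have hk' := he0.symm.trans hk
            simp [Prod.ext_iff, h1, h2, h2', hne] at hk'
          · exfalso
            have hk' := he1.symm.trans hk
            simp [Prod.ext_iff, h1, h2, h2', hne] at hk'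
          · rfl
    · have he1 : (e1 m) ((1 : ZMod 2), a) = (0, a) := by simp [e1, f1, h2]
      have he2 : (e2 m) ((1 : ZMod 2), a) = (0, a + 1) := by simp [e2, f2, h2]
      rcases z2 j with hj | hj <;> subst hj
      · rcases hq with hb | ⟨hb, -⟩
        · subst hb
          refine ⟨2, by simp [he2], ?_⟩
          intro k hk
          fin_cases k
          · exfalso
            have hk' := he0.symm.trans hk
            simp [Prod.ext_iff, h1, h2, h2', hne] at hk'
          · exfalso
            have hk' := he1.symm.trans hk
            simp [Prod.ext_iff, h1, h2, h2', hne] at hk'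
          · rfl
        · subst hb
          refine ⟨1, by simp [he1], ?_⟩
          intro k hk
          fin_cases k
          · exfalso
            have hk' := he0.symm.trans hk
            simp [Prod.ext_iff, h1, h2, h2', hne] at hk'
          · rfl
          · exfalso
            have hk' := he2.symm.trans hk
            simp [Prod.ext_iff, h1, h2, h2', hne] at hk'
      · have hb : b = a + 1 := by
          rcases hq with h | ⟨h, hne'⟩
          · exact h
          · exact absurd rfl hne'
        subst hb
        refine ⟨0, by simp [he0], ?_⟩
        intro k hk
        fin_cases k
        · rfl
        · exfalso
          have hk' := he1.symm.trans hk
          simp [Prod.ext_iff, h1, h2, h2', hne] at hk'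
        · exfalso
          have hk' := he2.symm.trans hk
          simp [Prod.ext_iff, h1, h2, h2', hne] at hk'
end

section
/- (Lemma 3.5.) For all nonnegative integers r and s, there exists a solution to HWP*(8; 4^r, 8^s) if and only if r + s = 7. -/
lemma minPer4 {α : Type*} (f : α → α) (x : α) (h4 : f^[4] x = x) (h2 : f^[2] x ≠ x) :
    Function.minimalPeriod f x = 4 := by
  have hp : Function.IsPeriodicPt f 4 x := h4
  have hdvd : Function.minimalPeriod f x ∣ 4 := Function.IsPeriodicPt.minimalPeriod_dvd hp
  have hpos : 0 < Function.minimalPeriod f x := hp.minimalPeriod_pos (by norm_num)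
  have hit : f^[Function.minimalPeriod f x] x = x := Function.iterate_minimalPeriod
  have hle : Function.minimalPeriod f x ≤ 4 := Nat.le_of_dvd (by norm_num) hdvd
  set k := Function.minimalPeriod f x with hk
  have hcases : k = 1 ∨ k = 2 ∨ k = 3 ∨ k = 4 := by omega
  rcases hcases with h | h | h | h
  · rw [h] at hit
    exact absurd ((show Function.IsPeriodicPt f 1 x from hit).mul_const 2) h2
  · rw [h] at hit; exact absurd hit h2
  · rw [h] at hdvd; norm_num at hdvd
  · exact h

lemma minPer8 {α : Type*} (f : α → α) (x : α) (h8 : f^[8] x = x) (h4 : f^[4] x ≠ x) :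
    Function.minimalPeriod f x = 8 := by
  have hp : Function.IsPeriodicPt f 8 x := h8
  have hdvd : Function.minimalPeriod f x ∣ 8 := Function.IsPeriodicPt.minimalPeriod_dvd hp
  have hpos : 0 < Function.minimalPeriod f x := hp.minimalPeriod_pos (by norm_num)
  have hit : f^[Function.minimalPeriod f x] x = x := Function.iterate_minimalPeriod
  have hle : Function.minimalPeriod f x ≤ 8 := Nat.le_of_dvd (by norm_num) hdvd
  set k := Function.minimalPeriod f x with hk
  have hdvd2 : k = 1 ∨ k = 2 ∨ k = 4 ∨ k = 8 := by
    rcases hdvd with ⟨c, hc⟩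
    interval_cases k <;> omega
  rcases hdvd2 with h | h | h | h
  · rw [h] at hit
    exact absurd ((show Function.IsPeriodicPt f 1 x from hit).mul_const 4) h4
  · rw [h] at hit
    exact absurd ((show Function.IsPeriodicPt f 2 x from hit).mul_const 2) h4
  · rw [h] at hit; exact absurd hit h4
  · exact h

lemma solution_of (r s : ℕ) (h : r + s = 7) (σ : Fin 7 → Equiv.Perm (Fin 8))
    (h4 : ∀ i : Fin 7, (i : ℕ) < r → ∀ x, (⇑(σ i))^[4] x = x ∧ (⇑(σ i))^[2] x ≠ x)
    (h8 : ∀ i : Fin 7, r ≤ (i : ℕ) → ∀ x, (⇑(σ i))^[8] x = x ∧ (⇑(σ i))^[4] x ≠ x)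
    (hu : ∀ x y : Fin 8, x ≠ y → ∃ i : Fin 7, σ i x = y ∧ ∀ j : Fin 7, σ j x = y → j = i) :
    HWPStarSolution 8 4 8 r s := by
  refine ⟨fun i => σ ⟨i.1, by omega⟩, ?_, ?_, ?_⟩
  · intro i hi x
    exact minPer4 _ x (h4 ⟨i.1, by omega⟩ hi x).1 (h4 ⟨i.1, by omega⟩ hi x).2
  · intro i hi x
    exact minPer8 _ x (h8 ⟨i.1, by omega⟩ hi x).1 (h8 ⟨i.1, by omega⟩ hi x).2
  · intro x y hxy
    obtain ⟨i, hi, hun⟩ := hu x y hxy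
    refine ⟨⟨i.1, by omega⟩, hi, ?_⟩
    intro j hj
    have hv : (j : ℕ) = (i : ℕ) := congrArg Fin.val (hun ⟨j.1, by omega⟩ hj)
    exact Fin.ext hv
def fam0 : Fin 7 → Equiv.Perm (Fin 8) :=
  ![⟨![6, 3, 1, 5, 0, 4, 7, 2], ![4, 2, 7, 1, 5, 3, 0, 6], by decide, by decide⟩,
    ⟨![3, 2, 4, 1, 5, 7, 0, 6], ![6, 3, 1, 0, 2, 4, 7, 5], by decide, by decide⟩,
    ⟨![1, 5, 7, 2, 3, 6, 4, 0], ![7, 0, 3, 4, 6, 1, 5, 2], by decide, by decide⟩,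
    ⟨![5, 7, 3, 0, 6, 1, 2, 4], ![3, 5, 6, 2, 7, 0, 4, 1], by decide, by decide⟩,
    ⟨![2, 0, 6, 4, 7, 3, 5, 1], ![1, 7, 0, 5, 3, 6, 2, 4], by decide, by decide⟩,
    ⟨![7, 4, 5, 6, 2, 0, 1, 3], ![5, 6, 4, 7, 1, 2, 3, 0], by decide, by decide⟩,
    ⟨![4, 6, 0, 7, 1, 2, 3, 5], ![2, 4, 5, 6, 0, 7, 1, 3], by decide, by decide⟩]

def fam1 : Fin 7 → Equiv.Perm (Fin 8) :=
  ![⟨![2, 5, 6, 4, 1, 3, 7, 0], ![7, 4, 0, 5, 3, 1, 2, 6], by decide, by decide⟩,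
    ⟨![7, 3, 1, 6, 0, 4, 5, 2], ![4, 2, 7, 1, 5, 6, 3, 0], by decide, by decide⟩,
    ⟨![6, 7, 3, 0, 5, 2, 1, 4], ![3, 6, 5, 2, 7, 4, 0, 1], by decide, by decide⟩,
    ⟨![3, 4, 7, 1, 6, 0, 2, 5], ![5, 3, 6, 0, 1, 7, 4, 2], by decide, by decide⟩,
    ⟨![1, 2, 4, 5, 3, 7, 0, 6], ![6, 0, 1, 4, 2, 3, 7, 5], by decide, by decide⟩,
    ⟨![4, 0, 5, 7, 2, 6, 3, 1], ![1, 7, 4, 6, 0, 2, 5, 3], by decide, by decide⟩,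
    ⟨![5, 6, 0, 2, 7, 1, 4, 3], ![2, 5, 3, 7, 6, 0, 1, 4], by decide, by decide⟩]

def fam2 : Fin 7 → Equiv.Perm (Fin 8) :=
  ![⟨![1, 3, 0, 2, 7, 6, 4, 5], ![2, 0, 3, 1, 6, 7, 5, 4], by decide, by decide⟩,
    ⟨![5, 4, 6, 7, 0, 1, 3, 2], ![4, 5, 7, 6, 1, 0, 2, 3], by decide, by decide⟩,
    ⟨![7, 2, 5, 1, 6, 4, 0, 3], ![6, 3, 1, 7, 5, 2, 4, 0], by decide, by decide⟩,
    ⟨![4, 7, 3, 5, 1, 0, 2, 6], ![5, 4, 6, 2, 0, 3, 7, 1], by decide, by decide⟩,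
    ⟨![3, 6, 1, 4, 2, 7, 5, 0], ![7, 2, 4, 0, 3, 6, 1, 5], by decide, by decide⟩,
    ⟨![2, 0, 4, 6, 5, 3, 7, 1], ![1, 7, 0, 5, 2, 4, 3, 6], by decide, by decide⟩,
    ⟨![6, 5, 7, 0, 3, 2, 1, 4], ![3, 6, 5, 4, 7, 1, 0, 2], by decide, by decide⟩]

def fam3 : Fin 7 → Equiv.Perm (Fin 8) :=
  ![⟨![4, 0, 1, 6, 2, 3, 7, 5], ![1, 2, 4, 5, 0, 7, 3, 6], by decide, by decide⟩,
    ⟨![5, 7, 6, 0, 3, 4, 1, 2], ![3, 6, 7, 4, 5, 0, 2, 1], by decide, by decide⟩,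
    ⟨![3, 6, 4, 5, 1, 7, 2, 0], ![7, 4, 6, 0, 2, 3, 1, 5], by decide, by decide⟩,
    ⟨![2, 3, 7, 4, 6, 0, 5, 1], ![5, 7, 0, 1, 3, 6, 4, 2], by decide, by decide⟩,
    ⟨![7, 4, 5, 2, 0, 1, 3, 6], ![4, 5, 3, 6, 1, 2, 7, 0], by decide, by decide⟩,
    ⟨![1, 2, 3, 7, 5, 6, 0, 4], ![6, 0, 1, 2, 7, 4, 5, 3], by decide, by decide⟩,
    ⟨![6, 5, 0, 1, 7, 2, 4, 3], ![2, 3, 5, 7, 6, 1, 0, 4], by decide, by decide⟩]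

def fam4 : Fin 7 → Equiv.Perm (Fin 8) :=
  ![⟨![1, 3, 7, 6, 2, 4, 0, 5], ![6, 0, 4, 1, 5, 7, 3, 2], by decide, by decide⟩,
    ⟨![6, 7, 4, 5, 3, 2, 1, 0], ![7, 6, 5, 4, 2, 3, 0, 1], by decide, by decide⟩,
    ⟨![3, 6, 1, 4, 5, 0, 7, 2], ![5, 2, 7, 0, 3, 4, 1, 6], by decide, by decide⟩,
    ⟨![5, 2, 3, 7, 0, 6, 4, 1], ![4, 7, 1, 2, 6, 0, 5, 3], by decide, by decide⟩,
    ⟨![7, 0, 5, 1, 6, 3, 2, 4], ![1, 3, 6, 5, 7, 2, 4, 0], by decide, by decide⟩,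
    ⟨![4, 5, 0, 2, 1, 7, 3, 6], ![2, 4, 3, 6, 0, 1, 7, 5], by decide, by decide⟩,
    ⟨![2, 4, 6, 0, 7, 1, 5, 3], ![3, 5, 0, 7, 1, 6, 2, 4], by decide, by decide⟩]

def fam5 : Fin 7 → Equiv.Perm (Fin 8) :=
  ![⟨![6, 4, 3, 1, 2, 0, 7, 5], ![5, 3, 4, 2, 1, 7, 0, 6], by decide, by decide⟩,
    ⟨![2, 0, 7, 5, 3, 6, 4, 1], ![1, 7, 0, 4, 6, 3, 5, 2], by decide, by decide⟩,
    ⟨![5, 2, 0, 4, 7, 1, 3, 6], ![2, 5, 1, 6, 3, 0, 7, 4], by decide, by decide⟩,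
    ⟨![4, 7, 6, 0, 5, 3, 1, 2], ![3, 6, 7, 5, 0, 4, 2, 1], by decide, by decide⟩,
    ⟨![1, 3, 4, 7, 6, 2, 5, 0], ![7, 0, 5, 1, 2, 6, 4, 3], by decide, by decide⟩,
    ⟨![3, 6, 5, 2, 1, 7, 0, 4], ![6, 4, 3, 0, 7, 2, 1, 5], by decide, by decide⟩,
    ⟨![7, 5, 1, 6, 0, 4, 2, 3], ![4, 2, 6, 7, 5, 1, 3, 0], by decide, by decide⟩]

def fam6 : Fin 7 → Equiv.Perm (Fin 8) :=
  ![⟨![2, 7, 1, 5, 3, 6, 4, 0], ![7, 2, 0, 4, 6, 3, 5, 1], by decide, by decide⟩,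
    ⟨![5, 3, 6, 7, 1, 2, 0, 4], ![6, 4, 5, 1, 7, 0, 2, 3], by decide, by decide⟩,
    ⟨![1, 6, 4, 2, 7, 0, 5, 3], ![5, 0, 3, 7, 2, 6, 1, 4], by decide, by decide⟩,
    ⟨![4, 2, 7, 0, 6, 1, 3, 5], ![3, 5, 1, 6, 0, 7, 4, 2], by decide, by decide⟩,
    ⟨![3, 4, 0, 6, 5, 7, 2, 1], ![2, 7, 6, 0, 1, 4, 3, 5], by decide, by decide⟩,
    ⟨![7, 0, 5, 4, 2, 3, 1, 6], ![1, 6, 4, 5, 3, 2, 7, 0], by decide, by decide⟩,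
    ⟨![6, 5, 3, 1, 0, 4, 7, 2], ![4, 3, 7, 2, 5, 1, 0, 6], by decide, by decide⟩]

def fam7 : Fin 7 → Equiv.Perm (Fin 8) :=
  ![⟨![7, 3, 5, 2, 0, 1, 4, 6], ![4, 5, 3, 1, 6, 2, 7, 0], by decide, by decide⟩,
    ⟨![5, 2, 3, 7, 6, 4, 0, 1], ![6, 7, 1, 2, 5, 0, 4, 3], by decide, by decide⟩,
    ⟨![1, 4, 6, 0, 3, 7, 5, 2], ![3, 0, 7, 4, 1, 6, 2, 5], by decide, by decide⟩,
    ⟨![4, 5, 7, 1, 2, 6, 3, 0], ![7, 3, 4, 6, 0, 1, 5, 2], by decide, by decide⟩,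
    ⟨![3, 6, 0, 5, 1, 2, 7, 4], ![2, 4, 5, 0, 7, 3, 1, 6], by decide, by decide⟩,
    ⟨![6, 0, 1, 4, 7, 3, 2, 5], ![1, 2, 6, 5, 3, 7, 0, 4], by decide, by decide⟩,
    ⟨![2, 7, 4, 6, 5, 0, 1, 3], ![5, 6, 0, 7, 2, 4, 3, 1], by decide, by decide⟩]


/-- HWP*(8; 4^r, 8^s) has a solution if and only if r + s = 7. -/
theorem hwpStar_8_4_8 (r s : ℕ) :
    HWPStarSolution 8 4 8 r s ↔ r + s = 7 := by
  constructor
  · rintro ⟨σ, h4, h8, hu⟩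
    have hne : ∀ (i : Fin (r + s)) (x : Fin 8), σ i x ≠ x := by
      intro i x hfix
      have h1 : Function.minimalPeriod ⇑(σ i) x = 1 :=
        Function.minimalPeriod_eq_one_iff_isFixedPt.2 hfix
      rcases lt_or_ge (i : ℕ) r with hi | hi
      · have := h4 i hi x; omega
      · have := h8 i hi x; omega
    let F : Fin (r + s) × Fin 8 → {p : Fin 8 × Fin 8 // p.1 ≠ p.2} :=
      fun q => ⟨(q.2, σ q.1 q.2), fun heq => hne q.1 q.2 heq.symm⟩
    have hbij : Function.Bijective F := by
      constructor
      · rintro ⟨i, x⟩ ⟨j, y⟩ hFij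
        have hpair : (x, σ i x) = (y, σ j y) := congrArg Subtype.val hFij
        have hx : x = y := congrArg Prod.fst hpair
        subst hx
        have hs : σ i x = σ j x := congrArg Prod.snd hpair
        obtain ⟨k, hk, hun⟩ := hu x (σ i x) (fun he => hne i x he.symm)
        have hik := hun i rfl
        have hjk := hun j hs.symm
        rw [hik, hjk]
      · rintro ⟨⟨x, y⟩, hxy⟩
        obtain ⟨i, hi, -⟩ := hu x y hxy
        exact ⟨(i, x), Subtype.ext (by simp [F, hi])⟩
    have hcard := Fintype.card_of_bijective hbij
    have h1 : Fintype.card (Fin (r + s) × Fin 8) = (r + s) * 8 := by simp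
    have h2 : Fintype.card {p : Fin 8 × Fin 8 // p.1 ≠ p.2} = 56 := by decide
    omega
  · intro h
    have hr : r ≤ 7 := by omega
    interval_cases r
    · have : s = 7 := by omega
      subst this
      exact solution_of 0 7 rfl fam0 (by decide) (by decide) (by decide)
    · have : s = 6 := by omega
      subst this
      exact solution_of 1 6 rfl fam1 (by decide) (by decide) (by decide)
    · have : s = 5 := by omega
      subst this
      exact solution_of 2 5 rfl fam2 (by decide) (by decide) (by decide)
    · have : s = 4 := by omega
      subst this
      exact solution_of 3 4 rfl fam3 (by decide) (by decide) (by decide)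
    · have : s = 3 := by omega
      subst this
      exact solution_of 4 3 rfl fam4 (by decide) (by decide) (by decide)
    · have : s = 2 := by omega
      subst this
      exact solution_of 5 2 rfl fam5 (by decide) (by decide) (by decide)
    · have : s = 1 := by omega
      subst this
      exact solution_of 6 1 rfl fam6 (by decide) (by decide) (by decide)
    · have : s = 0 := by omega
      subst this
      exact solution_of 7 0 rfl fam7 (by decide) (by decide) (by decide)
end

section
/- (Lemma 3.6, case (4,6).) For all nonnegative integers r and s, there exists a solution to HWP*(12; 4^r, 6^s) if and only if r + s = 11. -/
set_option maxRecDepth 100000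
set_option maxHeartbeats 2000000

/-- Build a permutation of `Fin 12` from a function and its inverse. -/
def mkP (f g : Fin 12 → Fin 12) (h₁ : Function.LeftInverse g f)
    (h₂ : Function.RightInverse g f) : Equiv.Perm (Fin 12) := ⟨f, g, h₁, h₂⟩

lemma minPeriod4 (f : Equiv.Perm (Fin 12)) (h4 : ∀ x, (⇑f)^[4] x = x)
    (h1 : ∀ x, f x ≠ x) (h2 : ∀ x, f (f x) ≠ x) (x : Fin 12) :
    Function.minimalPeriod ⇑f x = 4 := by
  have hp : Function.IsPeriodicPt ⇑f 4 x := h4 x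
  have hd : Function.minimalPeriod ⇑f x ∣ 4 := hp.minimalPeriod_dvd
  have hpos : 0 < Function.minimalPeriod ⇑f x :=
    Function.IsPeriodicPt.minimalPeriod_pos (by norm_num) hp
  have hmp := Function.isPeriodicPt_minimalPeriod ⇑f x
  have hle : Function.minimalPeriod ⇑f x ≤ 4 := Nat.le_of_dvd (by norm_num) hd
  interval_cases h : Function.minimalPeriod ⇑f x
  · simp [Function.IsPeriodicPt, Function.IsFixedPt] at hmp
    exact absurd hmp (h1 x)
  · simp [Function.IsPeriodicPt, Function.IsFixedPt,
      Function.iterate_succ_apply'] at hmp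
    exact absurd hmp (h2 x)
  · exact absurd hd (by norm_num)
  · rfl
lemma minPeriod6 (f : Equiv.Perm (Fin 12)) (h6 : ∀ x, (⇑f)^[6] x = x)
    (h1 : ∀ x, f x ≠ x) (h2 : ∀ x, f (f x) ≠ x) (h3 : ∀ x, f (f (f x)) ≠ x) (x : Fin 12) :
    Function.minimalPeriod ⇑f x = 6 := by
  have hp : Function.IsPeriodicPt ⇑f 6 x := h6 x
  have hd : Function.minimalPeriod ⇑f x ∣ 6 := hp.minimalPeriod_dvd
  have hpos : 0 < Function.minimalPeriod ⇑f x :=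
    Function.IsPeriodicPt.minimalPeriod_pos (by norm_num) hp
  have hmp := Function.isPeriodicPt_minimalPeriod ⇑f x
  have hle : Function.minimalPeriod ⇑f x ≤ 6 := Nat.le_of_dvd (by norm_num) hd
  interval_cases h : Function.minimalPeriod ⇑f x
  · simp [Function.IsPeriodicPt, Function.IsFixedPt] at hmp
    exact absurd hmp (h1 x)
  · simp [Function.IsPeriodicPt, Function.IsFixedPt,
      Function.iterate_succ_apply'] at hmp
    exact absurd hmp (h2 x)
  · simp [Function.IsPeriodicPt, Function.IsFixedPt,
      Function.iterate_succ_apply'] at hmp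
    exact absurd hmp (h3 x)
  · exact absurd hd (by norm_num)
  · exact absurd hd (by norm_num)
  · rfl

/-- HWP*(12; 4^r, 6^s) has a solution if and only if r + s = 11. -/
theorem hwpStar_12_4_6 (r s : ℕ) :
    HWPStarSolution 12 4 6 r s ↔ r + s = 11 := by
  constructor
  · rintro ⟨σ, h4, h6, hu⟩
    have hfp : ∀ (i : Fin (r + s)) (x : Fin 12), σ i x ≠ x := by
      intro i x hx
      have h1 : Function.IsPeriodicPt ⇑(σ i) 1 x := by
        simpa [Function.IsPeriodicPt, Function.IsFixedPt] using hx
      have hdvd := h1.minimalPeriod_dvd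
      rcases lt_or_ge (i : ℕ) r with hi | hi
      · rw [h4 i hi x] at hdvd; omega
      · rw [h6 i hi x] at hdvd; omega
    let f : Fin 12 × Fin (r + s) → {p : Fin 12 × Fin 12 // p.1 ≠ p.2} :=
      fun q => ⟨(q.1, σ q.2 q.1), Ne.symm (hfp q.2 q.1)⟩
    have hbij : Function.Bijective f := by
      constructor
      · rintro ⟨x, i⟩ ⟨x', i'⟩ h
        have h' : (x, σ i x) = (x', σ i' x') := congrArg Subtype.val h
        have hx : x = x' := congrArg Prod.fst h'
        subst hx
        have hs : σ i x = σ i' x := congrArg Prod.snd h'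
        obtain ⟨j, hj, hjall⟩ := hu x (σ i x) (Ne.symm (hfp i x))
        have hi : i = j := hjall i rfl
        have hi' : i' = j := hjall i' hs.symm
        simp [hi, hi']
      · rintro ⟨⟨x, y⟩, hxy⟩
        obtain ⟨i, hi, -⟩ := hu x y hxy
        exact ⟨(x, i), by simp [f, hi]⟩
    have hcard := Fintype.card_congr (Equiv.ofBijective f hbij)
    have hc2 : Fintype.card {p : Fin 12 × Fin 12 // p.1 ≠ p.2} = 132 := by decide
    simp [Fintype.card_prod, hc2] at hcard
    omega
  · intro h
    have hr : r ≤ 11 := by omega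
    interval_cases r
    · -- r = 0
      obtain rfl : s = 11 := by omega
      refine ⟨![mkP ![6,8,1,2,11,9,4,10,7,0,3,5] ![9,2,3,10,6,11,0,8,1,5,7,4] (by decide) (by decide),
        mkP ![5,3,10,8,6,11,1,2,9,4,0,7] ![10,6,7,1,9,0,4,11,3,8,2,5] (by decide) (by decide),
        mkP ![11,5,6,10,9,2,0,8,4,3,7,1] ![6,11,5,9,8,1,2,10,7,4,3,0] (by decide) (by decide),
        mkP ![3,9,0,1,7,8,2,5,10,6,11,4] ![2,3,6,0,11,7,9,4,5,1,8,10] (by decide) (by decide),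
        mkP ![4,10,9,0,1,3,8,6,11,7,5,2] ![3,4,11,5,0,10,7,9,6,2,1,8] (by decide) (by decide),
        mkP ![8,11,5,9,3,10,7,1,6,2,4,0] ![11,7,9,4,10,2,8,6,0,3,5,1] (by decide) (by decide),
        mkP ![7,6,8,11,2,0,3,4,5,10,1,9] ![5,10,4,6,7,8,1,0,2,11,9,3] (by decide) (by decide),
        mkP ![2,0,4,6,10,7,5,9,1,11,8,3] ![1,8,0,11,2,6,3,5,10,7,4,9] (by decide) (by decide),
        mkP ![9,4,3,7,8,1,10,11,0,5,2,6] ![8,5,10,2,1,9,11,3,4,0,6,7] (by decide) (by decide),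
        mkP ![10,2,7,4,5,6,11,0,3,1,9,8] ![7,9,1,8,3,4,5,2,11,10,0,6] (by decide) (by decide),
        mkP ![1,7,11,5,0,4,9,3,2,8,6,10] ![4,0,8,7,5,3,10,1,9,6,11,2] (by decide) (by decide)], ?_, ?_, ?_⟩
      · intro i hi x
        fin_cases i
        · exact absurd hi (by decide)
        · exact absurd hi (by decide)
        · exact absurd hi (by decide)
        · exact absurd hi (by decide)
        · exact absurd hi (by decide)
        · exact absurd hi (by decide)
        · exact absurd hi (by decide)
        · exact absurd hi (by decide)
        · exact absurd hi (by decide)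
        · exact absurd hi (by decide)
        · exact absurd hi (by decide)
      · intro i hi x
        fin_cases i
        · exact minPeriod6 _ (by decide) (by decide) (by decide) (by decide) x
        · exact minPeriod6 _ (by decide) (by decide) (by decide) (by decide) x
        · exact minPeriod6 _ (by decide) (by decide) (by decide) (by decide) x
        · exact minPeriod6 _ (by decide) (by decide) (by decide) (by decide) x
        · exact minPeriod6 _ (by decide) (by decide) (by decide) (by decide) x
        · exact minPeriod6 _ (by decide) (by decide) (by decide) (by decide) x
        · exact minPeriod6 _ (by decide) (by decide) (by decide) (by decide) x
        · exact minPeriod6 _ (by decide) (by decide) (by decide) (by decide) x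
        · exact minPeriod6 _ (by decide) (by decide) (by decide) (by decide) x
        · exact minPeriod6 _ (by decide) (by decide) (by decide) (by decide) x
        · exact minPeriod6 _ (by decide) (by decide) (by decide) (by decide) x
      · simp only [ExistsUnique]
        decide
    · -- r = 1
      obtain rfl : s = 10 := by omega
      refine ⟨![mkP ![6,5,4,0,10,9,11,2,1,8,7,3] ![3,8,7,11,2,1,0,10,9,5,4,6] (by decide) (by decide),
        mkP ![3,0,8,11,9,4,1,6,10,2,5,7] ![1,6,9,0,5,10,7,11,2,4,8,3] (by decide) (by decide),
        mkP ![10,4,1,6,7,8,2,3,0,11,9,5] ![8,2,6,7,1,11,3,4,5,10,0,9] (by decide) (by decide),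
        mkP ![2,8,5,10,3,1,0,4,6,7,11,9] ![6,5,0,4,7,2,8,9,1,11,3,10] (by decide) (by decide),
        mkP ![5,10,6,7,11,2,3,0,9,1,4,8] ![7,9,5,6,10,0,2,3,11,8,1,4] (by decide) (by decide),
        mkP ![11,9,3,5,1,10,7,8,4,6,0,2] ![10,4,11,2,8,3,9,6,7,1,5,0] (by decide) (by decide),
        mkP ![9,11,10,8,2,0,4,5,7,3,1,6] ![5,10,4,9,6,7,11,8,3,0,2,1] (by decide) (by decide),
        mkP ![7,6,0,9,5,11,8,1,2,4,3,10] ![2,7,8,10,9,4,1,0,6,3,11,5] (by decide) (by decide),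
        mkP ![8,3,7,4,0,6,10,9,11,5,2,1] ![4,11,10,1,3,9,5,2,0,7,6,8] (by decide) (by decide),
        mkP ![4,2,9,1,6,7,5,11,3,10,8,0] ![11,3,1,8,0,6,4,5,10,2,9,7] (by decide) (by decide),
        mkP ![1,7,11,2,8,3,9,10,5,0,6,4] ![9,0,3,5,11,8,10,1,4,6,7,2] (by decide) (by decide)], ?_, ?_, ?_⟩
      · intro i hi x
        fin_cases i
        · exact minPeriod4 _ (by decide) (by decide) (by decide) x
        · exact absurd hi (by decide)
        · exact absurd hi (by decide)
        · exact absurd hi (by decide)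
        · exact absurd hi (by decide)
        · exact absurd hi (by decide)
        · exact absurd hi (by decide)
        · exact absurd hi (by decide)
        · exact absurd hi (by decide)
        · exact absurd hi (by decide)
        · exact absurd hi (by decide)
      · intro i hi x
        fin_cases i
        · exact absurd hi (by decide)
        · exact minPeriod6 _ (by decide) (by decide) (by decide) (by decide) x
        · exact minPeriod6 _ (by decide) (by decide) (by decide) (by decide) x
        · exact minPeriod6 _ (by decide) (by decide) (by decide) (by decide) x
        · exact minPeriod6 _ (by decide) (by decide) (by decide) (by decide) x
        · exact minPeriod6 _ (by decide) (by decide) (by decide) (by decide) x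
        · exact minPeriod6 _ (by decide) (by decide) (by decide) (by decide) x
        · exact minPeriod6 _ (by decide) (by decide) (by decide) (by decide) x
        · exact minPeriod6 _ (by decide) (by decide) (by decide) (by decide) x
        · exact minPeriod6 _ (by decide) (by decide) (by decide) (by decide) x
        · exact minPeriod6 _ (by decide) (by decide) (by decide) (by decide) x
      · simp only [ExistsUnique]
        decide
    · -- r = 2
      obtain rfl : s = 9 := by omega
      refine ⟨![mkP ![3,2,4,6,7,10,9,1,11,0,8,5] ![9,7,1,0,2,11,3,4,10,6,5,8] (by decide) (by decide),
        mkP ![2,5,7,11,0,6,10,4,9,3,1,8] ![4,10,0,9,7,1,5,2,11,8,6,3] (by decide) (by decide),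
        mkP ![1,11,0,4,10,3,7,2,5,8,9,6] ![2,0,7,5,3,8,11,6,9,10,4,1] (by decide) (by decide),
        mkP ![10,3,11,8,1,0,4,6,7,5,2,9] ![5,4,10,1,6,9,7,8,3,11,0,2] (by decide) (by decide),
        mkP ![7,0,5,2,9,4,1,8,10,11,6,3] ![1,6,3,11,5,2,10,0,7,4,8,9] (by decide) (by decide),
        mkP ![9,10,3,1,8,7,5,11,6,2,0,4] ![10,3,9,2,11,6,8,5,4,0,1,7] (by decide) (by decide),
        mkP ![4,6,9,7,5,8,2,0,3,10,11,1] ![7,11,6,8,0,4,1,3,5,2,9,10] (by decide) (by decide),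
        mkP ![6,9,10,0,11,1,8,5,2,4,3,7] ![3,5,8,10,9,7,0,11,6,1,2,4] (by decide) (by decide),
        mkP ![8,7,6,10,2,9,11,3,4,1,5,0] ![11,9,4,7,8,10,2,1,0,5,3,6] (by decide) (by decide),
        mkP ![11,4,8,5,3,2,0,9,1,6,7,10] ![6,8,5,4,1,3,9,10,2,7,11,0] (by decide) (by decide),
        mkP ![5,8,1,9,6,11,3,10,0,7,4,2] ![8,2,11,6,10,0,4,9,1,3,7,5] (by decide) (by decide)], ?_, ?_, ?_⟩
      · intro i hi x
        fin_cases i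
        · exact minPeriod4 _ (by decide) (by decide) (by decide) x
        · exact minPeriod4 _ (by decide) (by decide) (by decide) x
        · exact absurd hi (by decide)
        · exact absurd hi (by decide)
        · exact absurd hi (by decide)
        · exact absurd hi (by decide)
        · exact absurd hi (by decide)
        · exact absurd hi (by decide)
        · exact absurd hi (by decide)
        · exact absurd hi (by decide)
        · exact absurd hi (by decide)
      · intro i hi x
        fin_cases i
        · exact absurd hi (by decide)
        · exact absurd hi (by decide)
        · exact minPeriod6 _ (by decide) (by decide) (by decide) (by decide) x
        · exact minPeriod6 _ (by decide) (by decide) (by decide) (by decide) x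
        · exact minPeriod6 _ (by decide) (by decide) (by decide) (by decide) x
        · exact minPeriod6 _ (by decide) (by decide) (by decide) (by decide) x
        · exact minPeriod6 _ (by decide) (by decide) (by decide) (by decide) x
        · exact minPeriod6 _ (by decide) (by decide) (by decide) (by decide) x
        · exact minPeriod6 _ (by decide) (by decide) (by decide) (by decide) x
        · exact minPeriod6 _ (by decide) (by decide) (by decide) (by decide) x
        · exact minPeriod6 _ (by decide) (by decide) (by decide) (by decide) x
      · simp only [ExistsUnique]
        decide
    · -- r = 3
      obtain rfl : s = 8 := by omega
      refine ⟨![mkP ![8,2,6,5,9,0,10,4,3,11,1,7] ![5,10,1,8,7,3,2,11,0,4,6,9] (by decide) (by decide),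
        mkP ![1,9,4,11,3,7,5,10,0,8,6,2] ![8,0,11,4,2,6,10,5,9,1,7,3] (by decide) (by decide),
        mkP ![10,4,9,8,2,11,0,6,5,1,7,3] ![6,9,4,11,1,8,7,10,3,2,0,5] (by decide) (by decide),
        mkP ![6,7,0,4,8,10,11,2,9,5,3,1] ![2,11,7,10,3,9,0,1,4,8,5,6] (by decide) (by decide),
        mkP ![3,6,8,1,10,9,7,11,4,2,5,0] ![11,3,9,0,8,10,1,6,2,5,4,7] (by decide) (by decide),
        mkP ![9,0,10,2,11,3,1,5,7,4,8,6] ![1,6,3,5,9,7,11,8,10,0,2,4] (by decide) (by decide),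
        mkP ![5,8,7,9,6,1,3,0,2,10,11,4] ![7,5,8,6,11,0,4,2,1,3,9,10] (by decide) (by decide),
        mkP ![2,10,5,6,1,4,8,3,11,7,0,9] ![10,4,0,7,5,2,3,9,6,11,1,8] (by decide) (by decide),
        mkP ![4,11,3,7,5,8,9,1,6,0,2,10] ![9,7,10,2,0,4,8,3,5,6,11,1] (by decide) (by decide),
        mkP ![11,3,1,0,7,2,4,8,10,6,9,5] ![3,2,5,1,6,11,9,4,7,10,8,0] (by decide) (by decide),
        mkP ![7,5,11,10,0,6,2,9,1,3,4,8] ![4,8,6,9,10,1,5,0,11,7,3,2] (by decide) (by decide)], ?_, ?_, ?_⟩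
      · intro i hi x
        fin_cases i
        · exact minPeriod4 _ (by decide) (by decide) (by decide) x
        · exact minPeriod4 _ (by decide) (by decide) (by decide) x
        · exact minPeriod4 _ (by decide) (by decide) (by decide) x
        · exact absurd hi (by decide)
        · exact absurd hi (by decide)
        · exact absurd hi (by decide)
        · exact absurd hi (by decide)
        · exact absurd hi (by decide)
        · exact absurd hi (by decide)
        · exact absurd hi (by decide)
        · exact absurd hi (by decide)
      · intro i hi x
        fin_cases i
        · exact absurd hi (by decide)
        · exact absurd hi (by decide)
        · exact absurd hi (by decide)
        · exact minPeriod6 _ (by decide) (by decide) (by decide) (by decide) x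
        · exact minPeriod6 _ (by decide) (by decide) (by decide) (by decide) x
        · exact minPeriod6 _ (by decide) (by decide) (by decide) (by decide) x
        · exact minPeriod6 _ (by decide) (by decide) (by decide) (by decide) x
        · exact minPeriod6 _ (by decide) (by decide) (by decide) (by decide) x
        · exact minPeriod6 _ (by decide) (by decide) (by decide) (by decide) x
        · exact minPeriod6 _ (by decide) (by decide) (by decide) (by decide) x
        · exact minPeriod6 _ (by decide) (by decide) (by decide) (by decide) x
      · simp only [ExistsUnique]
        decide
    · -- r = 4
      obtain rfl : s = 7 := by omega
      refine ⟨![mkP ![3,5,7,10,2,11,4,6,1,0,9,8] ![9,8,4,0,6,1,7,2,11,10,3,5] (by decide) (by decide),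
        mkP ![1,9,0,4,10,7,5,8,6,2,11,3] ![2,0,9,11,3,6,8,5,7,1,4,10] (by decide) (by decide),
        mkP ![5,0,1,7,3,2,10,11,9,6,8,4] ![1,2,5,4,11,0,9,3,10,8,6,7] (by decide) (by decide),
        mkP ![9,2,11,5,6,4,3,0,7,8,1,10] ![7,10,1,6,5,3,4,8,9,0,11,2] (by decide) (by decide),
        mkP ![6,8,4,9,7,1,2,10,3,11,0,5] ![10,5,6,8,2,11,0,4,1,3,7,9] (by decide) (by decide),
        mkP ![2,10,8,0,1,6,9,3,11,4,5,7] ![3,4,0,7,9,10,5,11,2,6,1,8] (by decide) (by decide),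
        mkP ![10,11,5,2,9,8,0,1,4,3,7,6] ![6,7,3,9,8,2,11,10,5,4,0,1] (by decide) (by decide),
        mkP ![4,7,6,1,11,10,8,9,0,5,3,2] ![8,3,11,10,0,9,2,1,6,7,5,4] (by decide) (by decide),
        mkP ![7,4,9,6,8,3,11,5,10,1,2,0] ![11,9,10,5,1,7,3,0,4,2,8,6] (by decide) (by decide),
        mkP ![8,6,3,11,0,9,7,2,5,10,4,1] ![4,11,7,2,10,8,1,6,0,5,9,3] (by decide) (by decide),
        mkP ![11,3,10,8,5,0,1,4,2,7,6,9] ![5,6,8,1,7,4,10,9,3,11,2,0] (by decide) (by decide)], ?_, ?_, ?_⟩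
      · intro i hi x
        fin_cases i
        · exact minPeriod4 _ (by decide) (by decide) (by decide) x
        · exact minPeriod4 _ (by decide) (by decide) (by decide) x
        · exact minPeriod4 _ (by decide) (by decide) (by decide) x
        · exact minPeriod4 _ (by decide) (by decide) (by decide) x
        · exact absurd hi (by decide)
        · exact absurd hi (by decide)
        · exact absurd hi (by decide)
        · exact absurd hi (by decide)
        · exact absurd hi (by decide)
        · exact absurd hi (by decide)
        · exact absurd hi (by decide)
      · intro i hi x
        fin_cases i
        · exact absurd hi (by decide)
        · exact absurd hi (by decide)
        · exact absurd hi (by decide)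
        · exact absurd hi (by decide)
        · exact minPeriod6 _ (by decide) (by decide) (by decide) (by decide) x
        · exact minPeriod6 _ (by decide) (by decide) (by decide) (by decide) x
        · exact minPeriod6 _ (by decide) (by decide) (by decide) (by decide) x
        · exact minPeriod6 _ (by decide) (by decide) (by decide) (by decide) x
        · exact minPeriod6 _ (by decide) (by decide) (by decide) (by decide) x
        · exact minPeriod6 _ (by decide) (by decide) (by decide) (by decide) x
        · exact minPeriod6 _ (by decide) (by decide) (by decide) (by decide) x
      · simp only [ExistsUnique]
        decide
    · -- r = 5
      obtain rfl : s = 6 := by omega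
      refine ⟨![mkP ![7,3,6,11,0,1,9,10,2,8,4,5] ![4,5,8,1,10,11,2,0,9,6,7,3] (by decide) (by decide),
        mkP ![4,8,3,7,5,10,1,11,9,6,0,2] ![10,6,11,2,0,4,9,3,1,8,5,7] (by decide) (by decide),
        mkP ![2,6,9,0,1,11,7,4,5,3,8,10] ![3,4,0,9,7,8,1,6,10,2,11,5] (by decide) (by decide),
        mkP ![6,11,0,5,2,8,4,9,10,1,3,7] ![2,9,4,10,6,3,0,11,5,7,8,1] (by decide) (by decide),
        mkP ![10,4,1,2,3,0,5,8,11,7,6,9] ![5,2,3,4,1,6,10,9,7,11,0,8] (by decide) (by decide),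
        mkP ![11,9,8,1,10,7,3,0,6,2,5,4] ![7,3,9,6,11,10,8,5,2,1,4,0] (by decide) (by decide),
        mkP ![3,2,7,8,9,6,10,5,4,11,1,0] ![11,10,1,0,8,7,5,2,3,4,6,9] (by decide) (by decide),
        mkP ![1,5,10,4,8,2,11,6,7,0,9,3] ![9,0,5,11,3,1,7,8,4,10,2,6] (by decide) (by decide),
        mkP ![9,7,11,10,6,4,8,3,0,5,2,1] ![8,11,10,7,5,9,4,1,6,0,3,2] (by decide) (by decide),
        mkP ![8,10,5,9,7,3,0,2,1,4,11,6] ![6,8,7,5,9,2,11,4,0,3,1,10] (by decide) (by decide),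
        mkP ![5,0,4,6,11,9,2,1,3,10,7,8] ![1,7,6,8,2,0,3,10,11,5,9,4] (by decide) (by decide)], ?_, ?_, ?_⟩
      · intro i hi x
        fin_cases i
        · exact minPeriod4 _ (by decide) (by decide) (by decide) x
        · exact minPeriod4 _ (by decide) (by decide) (by decide) x
        · exact minPeriod4 _ (by decide) (by decide) (by decide) x
        · exact minPeriod4 _ (by decide) (by decide) (by decide) x
        · exact minPeriod4 _ (by decide) (by decide) (by decide) x
        · exact absurd hi (by decide)
        · exact absurd hi (by decide)
        · exact absurd hi (by decide)
        · exact absurd hi (by decide)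
        · exact absurd hi (by decide)
        · exact absurd hi (by decide)
      · intro i hi x
        fin_cases i
        · exact absurd hi (by decide)
        · exact absurd hi (by decide)
        · exact absurd hi (by decide)
        · exact absurd hi (by decide)
        · exact absurd hi (by decide)
        · exact minPeriod6 _ (by decide) (by decide) (by decide) (by decide) x
        · exact minPeriod6 _ (by decide) (by decide) (by decide) (by decide) x
        · exact minPeriod6 _ (by decide) (by decide) (by decide) (by decide) x
        · exact minPeriod6 _ (by decide) (by decide) (by decide) (by decide) x
        · exact minPeriod6 _ (by decide) (by decide) (by decide) (by decide) x
        · exact minPeriod6 _ (by decide) (by decide) (by decide) (by decide) x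
      · simp only [ExistsUnique]
        decide
    · -- r = 6
      obtain rfl : s = 5 := by omega
      refine ⟨![mkP ![9,8,4,5,7,1,10,11,3,6,0,2] ![10,5,11,8,2,3,9,4,1,0,6,7] (by decide) (by decide),
        mkP ![1,10,11,9,2,0,3,4,6,8,5,7] ![5,0,4,6,7,10,8,11,9,3,1,2] (by decide) (by decide),
        mkP ![4,2,3,10,9,6,7,8,5,11,1,0] ![11,10,1,2,0,8,5,6,7,4,3,9] (by decide) (by decide),
        mkP ![2,9,6,1,0,11,4,5,7,10,3,8] ![4,3,0,10,6,7,2,8,11,1,9,5] (by decide) (by decide),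
        mkP ![10,7,0,4,5,9,11,6,2,3,8,1] ![2,11,8,9,3,4,7,1,10,5,0,6] (by decide) (by decide),
        mkP ![8,6,5,11,3,7,0,10,1,4,2,9] ![6,8,10,4,9,2,1,5,0,11,7,3] (by decide) (by decide),
        mkP ![7,4,1,6,11,8,5,3,0,2,9,10] ![8,2,9,7,1,6,3,0,5,10,11,4] (by decide) (by decide),
        mkP ![11,5,10,8,6,2,1,0,9,7,4,3] ![7,6,5,11,10,1,4,9,3,8,2,0] (by decide) (by decide),
        mkP ![6,11,9,0,8,3,2,1,10,5,7,4] ![3,7,6,5,11,9,0,10,4,2,8,1] (by decide) (by decide),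
        mkP ![3,0,7,2,10,4,8,9,11,1,6,5] ![1,9,3,0,5,11,10,2,6,7,4,8] (by decide) (by decide),
        mkP ![5,3,8,7,1,10,9,2,4,0,11,6] ![9,4,7,1,8,0,11,3,2,6,5,10] (by decide) (by decide)], ?_, ?_, ?_⟩
      · intro i hi x
        fin_cases i
        · exact minPeriod4 _ (by decide) (by decide) (by decide) x
        · exact minPeriod4 _ (by decide) (by decide) (by decide) x
        · exact minPeriod4 _ (by decide) (by decide) (by decide) x
        · exact minPeriod4 _ (by decide) (by decide) (by decide) x
        · exact minPeriod4 _ (by decide) (by decide) (by decide) x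
        · exact minPeriod4 _ (by decide) (by decide) (by decide) x
        · exact absurd hi (by decide)
        · exact absurd hi (by decide)
        · exact absurd hi (by decide)
        · exact absurd hi (by decide)
        · exact absurd hi (by decide)
      · intro i hi x
        fin_cases i
        · exact absurd hi (by decide)
        · exact absurd hi (by decide)
        · exact absurd hi (by decide)
        · exact absurd hi (by decide)
        · exact absurd hi (by decide)
        · exact absurd hi (by decide)
        · exact minPeriod6 _ (by decide) (by decide) (by decide) (by decide) x
        · exact minPeriod6 _ (by decide) (by decide) (by decide) (by decide) x
        · exact minPeriod6 _ (by decide) (by decide) (by decide) (by decide) x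
        · exact minPeriod6 _ (by decide) (by decide) (by decide) (by decide) x
        · exact minPeriod6 _ (by decide) (by decide) (by decide) (by decide) x
      · simp only [ExistsUnique]
        decide
    · -- r = 7
      obtain rfl : s = 4 := by omega
      refine ⟨![mkP ![7,0,6,11,9,8,3,10,4,5,1,2] ![1,10,11,6,8,9,2,0,5,4,7,3] (by decide) (by decide),
        mkP ![8,7,1,10,3,2,11,5,6,4,9,0] ![11,2,5,4,9,7,8,1,0,10,3,6] (by decide) (by decide),
        mkP ![9,5,8,2,0,11,1,3,7,10,4,6] ![4,6,3,7,10,1,11,8,2,0,9,5] (by decide) (by decide),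
        mkP ![11,9,7,5,2,10,4,6,3,0,8,1] ![9,11,4,8,6,3,7,2,10,1,5,0] (by decide) (by decide),
        mkP ![4,6,5,7,11,1,2,8,9,3,0,10] ![10,5,6,9,0,2,1,3,7,8,11,4] (by decide) (by decide),
        mkP ![10,4,11,1,5,3,8,2,0,7,6,9] ![8,3,7,5,1,4,10,9,6,11,0,2] (by decide) (by decide),
        mkP ![1,3,9,6,7,4,0,11,10,8,2,5] ![6,0,10,1,5,11,3,4,9,2,8,7] (by decide) (by decide),
        mkP ![2,10,3,4,6,9,7,0,5,1,11,8] ![7,9,0,2,3,8,4,6,11,5,1,10] (by decide) (by decide),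
        mkP ![5,8,10,0,1,6,9,4,2,11,7,3] ![3,4,8,11,7,0,5,10,1,6,2,9] (by decide) (by decide),
        mkP ![6,11,0,8,10,7,5,9,1,2,3,4] ![2,8,9,10,11,6,0,5,3,7,4,1] (by decide) (by decide),
        mkP ![3,2,4,9,8,0,10,1,11,6,5,7] ![5,7,1,0,2,10,9,11,4,3,6,8] (by decide) (by decide)], ?_, ?_, ?_⟩
      · intro i hi x
        fin_cases i
        · exact minPeriod4 _ (by decide) (by decide) (by decide) x
        · exact minPeriod4 _ (by decide) (by decide) (by decide) x
        · exact minPeriod4 _ (by decide) (by decide) (by decide) x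
        · exact minPeriod4 _ (by decide) (by decide) (by decide) x
        · exact minPeriod4 _ (by decide) (by decide) (by decide) x
        · exact minPeriod4 _ (by decide) (by decide) (by decide) x
        · exact minPeriod4 _ (by decide) (by decide) (by decide) x
        · exact absurd hi (by decide)
        · exact absurd hi (by decide)
        · exact absurd hi (by decide)
        · exact absurd hi (by decide)
      · intro i hi x
        fin_cases i
        · exact absurd hi (by decide)
        · exact absurd hi (by decide)
        · exact absurd hi (by decide)
        · exact absurd hi (by decide)
        · exact absurd hi (by decide)
        · exact absurd hi (by decide)
        · exact absurd hi (by decide)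
        · exact minPeriod6 _ (by decide) (by decide) (by decide) (by decide) x
        · exact minPeriod6 _ (by decide) (by decide) (by decide) (by decide) x
        · exact minPeriod6 _ (by decide) (by decide) (by decide) (by decide) x
        · exact minPeriod6 _ (by decide) (by decide) (by decide) (by decide) x
      · simp only [ExistsUnique]
        decide
    · -- r = 8
      obtain rfl : s = 3 := by omega
      refine ⟨![mkP ![7,2,0,5,6,10,8,1,11,3,9,4] ![2,7,1,9,11,3,4,0,6,10,5,8] (by decide) (by decide),
        mkP ![8,0,6,2,9,3,5,4,10,11,1,7] ![1,10,3,5,7,6,2,11,0,4,8,9] (by decide) (by decide),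
        mkP ![6,10,1,9,7,11,4,0,2,5,8,3] ![7,2,8,11,6,9,0,4,10,3,1,5] (by decide) (by decide),
        mkP ![3,11,4,7,10,8,2,9,1,0,6,5] ![9,8,6,0,2,11,10,3,5,7,4,1] (by decide) (by decide),
        mkP ![9,5,10,4,8,6,11,3,7,2,0,1] ![10,11,9,7,3,1,5,8,4,0,2,6] (by decide) (by decide),
        mkP ![10,3,11,8,0,4,7,2,9,1,5,6] ![4,9,7,1,5,10,11,6,3,8,0,2] (by decide) (by decide),
        mkP ![2,7,9,11,3,1,0,8,5,6,4,10] ![6,5,0,4,10,8,9,1,7,2,11,3] (by decide) (by decide),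
        mkP ![11,6,5,0,1,7,9,10,3,4,2,8] ![3,4,10,8,9,2,1,5,11,6,7,0] (by decide) (by decide),
        mkP ![1,4,8,10,5,2,3,6,0,7,11,9] ![8,0,5,6,1,4,7,9,2,11,3,10] (by decide) (by decide),
        mkP ![5,8,3,6,2,9,1,11,4,10,7,0] ![11,6,4,2,8,0,3,10,1,5,9,7] (by decide) (by decide),
        mkP ![4,9,7,1,11,0,10,5,6,8,3,2] ![5,3,11,10,0,7,8,2,9,1,6,4] (by decide) (by decide)], ?_, ?_, ?_⟩
      · intro i hi x
        fin_cases i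
        · exact minPeriod4 _ (by decide) (by decide) (by decide) x
        · exact minPeriod4 _ (by decide) (by decide) (by decide) x
        · exact minPeriod4 _ (by decide) (by decide) (by decide) x
        · exact minPeriod4 _ (by decide) (by decide) (by decide) x
        · exact minPeriod4 _ (by decide) (by decide) (by decide) x
        · exact minPeriod4 _ (by decide) (by decide) (by decide) x
        · exact minPeriod4 _ (by decide) (by decide) (by decide) x
        · exact minPeriod4 _ (by decide) (by decide) (by decide) x
        · exact absurd hi (by decide)
        · exact absurd hi (by decide)
        · exact absurd hi (by decide)
      · intro i hi x
        fin_cases i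
        · exact absurd hi (by decide)
        · exact absurd hi (by decide)
        · exact absurd hi (by decide)
        · exact absurd hi (by decide)
        · exact absurd hi (by decide)
        · exact absurd hi (by decide)
        · exact absurd hi (by decide)
        · exact absurd hi (by decide)
        · exact minPeriod6 _ (by decide) (by decide) (by decide) (by decide) x
        · exact minPeriod6 _ (by decide) (by decide) (by decide) (by decide) x
        · exact minPeriod6 _ (by decide) (by decide) (by decide) (by decide) x
      · simp only [ExistsUnique]
        decide
    · -- r = 9
      obtain rfl : s = 2 := by omega
      refine ⟨![mkP ![1,4,8,9,7,6,2,0,5,10,11,3] ![7,0,6,11,1,8,5,4,2,3,9,10] (by decide) (by decide),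
        mkP ![4,3,9,7,6,0,5,10,11,8,1,2] ![5,10,11,1,0,6,4,3,9,2,7,8] (by decide) (by decide),
        mkP ![5,6,11,10,2,1,0,3,4,7,9,8] ![6,5,4,7,8,0,1,9,11,10,3,2] (by decide) (by decide),
        mkP ![3,9,7,1,10,11,8,6,2,0,5,4] ![9,3,8,0,11,10,7,2,6,1,4,5] (by decide) (by decide),
        mkP ![11,2,3,6,0,7,1,8,9,5,4,10] ![4,6,1,2,10,9,3,5,7,8,11,0] (by decide) (by decide),
        mkP ![2,7,5,11,8,10,9,4,1,3,0,6] ![10,8,0,9,7,2,11,1,4,6,5,3] (by decide) (by decide),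
        mkP ![10,0,1,4,5,8,7,11,3,6,2,9] ![1,2,10,8,3,4,9,6,5,11,0,7] (by decide) (by decide),
        mkP ![8,5,6,0,9,4,11,2,10,1,3,7] ![3,9,7,10,5,1,2,11,0,4,8,6] (by decide) (by decide),
        mkP ![6,10,0,2,11,9,3,1,7,4,8,5] ![2,7,3,6,9,11,0,8,10,5,1,4] (by decide) (by decide),
        mkP ![9,11,4,8,1,3,10,5,6,2,7,0] ![11,4,9,5,2,7,8,10,3,0,6,1] (by decide) (by decide),
        mkP ![7,8,10,5,3,2,4,9,0,11,6,1] ![8,11,5,4,6,3,10,0,1,7,2,9] (by decide) (by decide)], ?_, ?_, ?_⟩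
      · intro i hi x
        fin_cases i
        · exact minPeriod4 _ (by decide) (by decide) (by decide) x
        · exact minPeriod4 _ (by decide) (by decide) (by decide) x
        · exact minPeriod4 _ (by decide) (by decide) (by decide) x
        · exact minPeriod4 _ (by decide) (by decide) (by decide) x
        · exact minPeriod4 _ (by decide) (by decide) (by decide) x
        · exact minPeriod4 _ (by decide) (by decide) (by decide) x
        · exact minPeriod4 _ (by decide) (by decide) (by decide) x
        · exact minPeriod4 _ (by decide) (by decide) (by decide) x
        · exact minPeriod4 _ (by decide) (by decide) (by decide) x
        · exact absurd hi (by decide)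
        · exact absurd hi (by decide)
      · intro i hi x
        fin_cases i
        · exact absurd hi (by decide)
        · exact absurd hi (by decide)
        · exact absurd hi (by decide)
        · exact absurd hi (by decide)
        · exact absurd hi (by decide)
        · exact absurd hi (by decide)
        · exact absurd hi (by decide)
        · exact absurd hi (by decide)
        · exact absurd hi (by decide)
        · exact minPeriod6 _ (by decide) (by decide) (by decide) (by decide) x
        · exact minPeriod6 _ (by decide) (by decide) (by decide) (by decide) x
      · simp only [ExistsUnique]
        decide
    · -- r = 10
      obtain rfl : s = 1 := by omega
      refine ⟨![mkP ![5,3,8,11,9,4,1,10,7,0,2,6] ![9,6,10,1,5,0,11,8,2,4,7,3] (by decide) (by decide),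
        mkP ![4,7,0,2,3,11,8,6,1,10,5,9] ![2,8,3,4,0,10,7,1,6,11,9,5] (by decide) (by decide),
        mkP ![2,9,4,10,5,0,7,11,6,3,1,8] ![5,10,0,9,2,4,8,6,11,1,3,7] (by decide) (by decide),
        mkP ![11,5,3,0,1,7,9,4,10,8,6,2] ![3,4,11,2,7,1,10,5,9,6,8,0] (by decide) (by decide),
        mkP ![6,2,5,4,8,9,10,0,11,1,7,3] ![7,9,1,11,3,2,0,10,4,5,6,8] (by decide) (by decide),
        mkP ![8,0,9,6,10,1,4,2,5,11,3,7] ![1,5,7,10,6,8,3,11,0,2,4,9] (by decide) (by decide),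
        mkP ![1,4,10,8,6,2,0,3,9,7,11,5] ![6,0,5,7,1,11,4,9,3,8,2,10] (by decide) (by decide),
        mkP ![3,10,7,5,11,8,2,9,0,6,4,1] ![8,11,6,0,10,3,9,2,5,7,1,4] (by decide) (by decide),
        mkP ![7,6,11,1,0,3,5,8,4,2,9,10] ![4,3,9,5,8,6,1,0,7,10,11,2] (by decide) (by decide),
        mkP ![9,8,6,7,2,10,11,1,3,5,0,4] ![10,7,4,8,11,9,2,3,1,0,5,6] (by decide) (by decide),
        mkP ![10,11,1,9,7,6,3,5,2,4,8,0] ![11,2,8,6,9,7,5,4,10,3,0,1] (by decide) (by decide)], ?_, ?_, ?_⟩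
      · intro i hi x
        fin_cases i
        · exact minPeriod4 _ (by decide) (by decide) (by decide) x
        · exact minPeriod4 _ (by decide) (by decide) (by decide) x
        · exact minPeriod4 _ (by decide) (by decide) (by decide) x
        · exact minPeriod4 _ (by decide) (by decide) (by decide) x
        · exact minPeriod4 _ (by decide) (by decide) (by decide) x
        · exact minPeriod4 _ (by decide) (by decide) (by decide) x
        · exact minPeriod4 _ (by decide) (by decide) (by decide) x
        · exact minPeriod4 _ (by decide) (by decide) (by decide) x
        · exact minPeriod4 _ (by decide) (by decide) (by decide) x
        · exact minPeriod4 _ (by decide) (by decide) (by decide) x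
        · exact absurd hi (by decide)
      · intro i hi x
        fin_cases i
        · exact absurd hi (by decide)
        · exact absurd hi (by decide)
        · exact absurd hi (by decide)
        · exact absurd hi (by decide)
        · exact absurd hi (by decide)
        · exact absurd hi (by decide)
        · exact absurd hi (by decide)
        · exact absurd hi (by decide)
        · exact absurd hi (by decide)
        · exact absurd hi (by decide)
        · exact minPeriod6 _ (by decide) (by decide) (by decide) (by decide) x
      · simp only [ExistsUnique]
        decide
    · -- r = 11
      obtain rfl : s = 0 := by omega
      refine ⟨![mkP ![3,4,5,6,7,8,9,10,11,0,1,2] ![9,10,11,0,1,2,3,4,5,6,7,8] (by decide) (by decide),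
        mkP ![9,10,11,0,1,2,3,4,5,6,7,8] ![3,4,5,6,7,8,9,10,11,0,1,2] (by decide) (by decide),
        mkP ![10,0,4,9,3,6,11,5,1,2,8,7] ![1,8,9,4,2,7,5,11,10,3,0,6] (by decide) (by decide),
        mkP ![5,6,0,11,2,4,8,1,7,10,3,9] ![2,7,4,10,5,0,1,8,6,11,9,3] (by decide) (by decide),
        mkP ![11,2,7,1,9,10,4,3,6,8,0,5] ![10,3,1,7,6,11,8,2,9,4,5,0] (by decide) (by decide),
        mkP ![8,7,9,5,6,0,10,2,3,1,11,4] ![5,9,7,8,11,3,4,1,0,2,6,10] (by decide) (by decide),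
        mkP ![7,5,3,8,0,11,1,9,10,4,2,6] ![4,6,10,2,9,1,11,0,3,7,8,5] (by decide) (by decide),
        mkP ![2,8,6,10,11,9,7,0,4,3,5,1] ![7,11,0,9,8,10,2,6,1,5,3,4] (by decide) (by decide),
        mkP ![4,11,1,2,10,7,0,8,9,5,6,3] ![6,2,3,11,0,9,10,5,7,8,4,1] (by decide) (by decide),
        mkP ![1,9,10,7,8,3,5,6,2,11,4,0] ![11,0,8,5,10,6,7,3,4,1,2,9] (by decide) (by decide),
        mkP ![6,3,8,4,5,1,2,11,0,7,9,10] ![8,5,6,1,3,4,0,9,2,10,11,7] (by decide) (by decide)], ?_, ?_, ?_⟩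
      · intro i hi x
        fin_cases i
        · exact minPeriod4 _ (by decide) (by decide) (by decide) x
        · exact minPeriod4 _ (by decide) (by decide) (by decide) x
        · exact minPeriod4 _ (by decide) (by decide) (by decide) x
        · exact minPeriod4 _ (by decide) (by decide) (by decide) x
        · exact minPeriod4 _ (by decide) (by decide) (by decide) x
        · exact minPeriod4 _ (by decide) (by decide) (by decide) x
        · exact minPeriod4 _ (by decide) (by decide) (by decide) x
        · exact minPeriod4 _ (by decide) (by decide) (by decide) x
        · exact minPeriod4 _ (by decide) (by decide) (by decide) x
        · exact minPeriod4 _ (by decide) (by decide) (by decide) x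
        · exact minPeriod4 _ (by decide) (by decide) (by decide) x
      · intro i hi x
        fin_cases i
        · exact absurd hi (by decide)
        · exact absurd hi (by decide)
        · exact absurd hi (by decide)
        · exact absurd hi (by decide)
        · exact absurd hi (by decide)
        · exact absurd hi (by decide)
        · exact absurd hi (by decide)
        · exact absurd hi (by decide)
        · exact absurd hi (by decide)
        · exact absurd hi (by decide)
        · exact absurd hi (by decide)
      · simp only [ExistsUnique]
        decide
end
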